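/- arXiv:2401.00182 — 5 statements merged into one kernel-verified Lean document; each statement's English description precedes it below -/
import Mathlib

section
/- Let Γ be a linearly ordered abelian group and Δ a subgroup of Γ. Define the initial index ε(Γ|Δ) as the cardinality of the set of γ ∈ Γ with 0 ≤ γ and γ < δ for every positive δ ∈ Δ. If Δ has finite index e in Γ, then ε(Γ|Δ) ≤ e. -/
/-- **Initial index is at most the index.**
For a linearly ordered abelian group `Γ` and a subgroup `Δ` of finite index `e`,
the initial index `ε(Γ|Δ) = |{γ ∈ Γ | 0 ≤ γ < Δ_{>0}}|` satisfies `ε(Γ|Δ) ≤ e`. -/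
theorem initial_index_le_index {Γ : Type*} [AddCommGroup Γ] [LinearOrder Γ] [IsOrderedAddMonoid Γ]
    (Δ : AddSubgroup Γ) (e : ℕ) (he : Δ.index = e) (hfin : e ≠ 0) :
    Nat.card {γ : Γ | 0 ≤ γ ∧ ∀ δ ∈ Δ, 0 < δ → γ < δ} ≤ e := by
  have hcard : Nat.card (Γ ⧸ Δ) = e := he
  have : Finite (Γ ⧸ Δ) := Nat.finite_of_card_ne_zero (by rw [hcard]; exact hfin)
  rw [← hcard]
  refine Nat.card_le_card_of_injective
    (fun x => QuotientAddGroup.mk (x : Γ)) ?_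
  rintro ⟨a, ha0, ha⟩ ⟨b, hb0, hb⟩ h
  simp only [Subtype.mk.injEq]
  have hd : a - b ∈ Δ := by
    rwa [QuotientAddGroup.eq_iff_sub_mem] at h
  rcases lt_trichotomy a b with hlt | heq | hgt
  · have hmem : b - a ∈ Δ := by simpa using Δ.neg_mem hd
    have := hb _ hmem (sub_pos.mpr hlt)
    exact absurd (sub_le_self b ha0) (not_le.mpr this)
  · exact heq
  · have := ha _ hd (sub_pos.mpr hgt)
    exact absurd (sub_le_self a hb0) (not_le.mpr this)
end

section
/- Let Γ be a linearly ordered abelian group and Δ a subgroup of finite index e. If the initial index ε(Γ|Δ) equals e, then there exist γ₁, …, γ_e ∈ Γ with Γ = ⋃_{i=1}^e (γ_i + Δ), 0 = γ₁ < γ₂ < … < γ_e, and γ_e < δ for every positive δ ∈ Δ. -/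
/-- If the initial index `ε(Γ|Δ)` equals the (finite) index `e = [Γ:Δ]`, then there are
coset representatives `0 = γ₁ < γ₂ < … < γ_e` of `Δ` in `Γ`, all of them smaller than
every positive element of `Δ`. -/
theorem exists_coset_reps_of_initial_index_eq_index {Γ : Type*} [AddCommGroup Γ] [LinearOrder Γ]
    [IsOrderedAddMonoid Γ]
    (Δ : AddSubgroup Γ) (hfin : Δ.FiniteIndex)
    (hε : Nat.card {γ : Γ | 0 ≤ γ ∧ ∀ δ ∈ Δ, 0 < δ → γ < δ} = Δ.index) :
    ∃ γ : Fin Δ.index → Γ,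
      (∀ i : Fin Δ.index, (i : ℕ) = 0 → γ i = 0) ∧
      StrictMono γ ∧
      (∀ x : Γ, ∃ i, x - γ i ∈ Δ) ∧
      (∀ i, ∀ δ ∈ Δ, 0 < δ → γ i < δ) := by
  set S : Set Γ := {γ : Γ | 0 ≤ γ ∧ ∀ δ ∈ Δ, 0 < δ → γ < δ} with hSdef
  have h0S : (0 : Γ) ∈ S := ⟨le_refl 0, fun δ _ hδ => hδ⟩
  have hSfin : S.Finite := by
    rw [← Set.not_infinite]
    intro h
    have := h.to_subtype
    rw [Nat.card_eq_zero_of_infinite] at hε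
    exact hfin.index_ne_zero hε.symm
  classical
  set t : Finset Γ := hSfin.toFinset with htdef
  have hmem : ∀ x, x ∈ t ↔ x ∈ S := fun x => hSfin.mem_toFinset
  have htcard : t.card = Δ.index := by
    rw [← hε, Nat.card_eq_card_finite_toFinset hSfin]
  have e := t.orderIsoOfFin htcard
  refine ⟨fun i => (e i : Γ), ?_, ?_, ?_, ?_⟩
  · intro i hi
    have h0t : (0 : Γ) ∈ t := (hmem 0).2 h0S
    obtain ⟨j, hj⟩ := e.surjective ⟨0, h0t⟩
    have hij : i ≤ j := by
      have : (i : ℕ) ≤ (j : ℕ) := by omega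
      exact this
    have h1 : (e i : Γ) ≤ (e j : Γ) := e.monotone hij
    rw [hj] at h1
    have h2 : (0 : Γ) ≤ (e i : Γ) := ((hmem _).1 (e i).2).1
    exact le_antisymm h1 h2
  · intro i j hij
    exact e.strictMono hij
  · -- surjectivity on cosets
    have hinj : Function.Injective fun s : t => QuotientAddGroup.mk (s := Δ) (s : Γ) := by
      rintro ⟨a, ha⟩ ⟨b, hb⟩ hab
      simp only [QuotientAddGroup.eq] at hab
      have haS := (hmem a).1 ha
      have hbS := (hmem b).1 hb
      rcases lt_trichotomy a b with h | h | h
      · exact absurd (hbS.2 _ hab (by rwa [neg_add_eq_sub, sub_pos]))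
          (not_lt.2 (add_le_iff_nonpos_left.mpr (neg_nonpos.mpr haS.1)))
      · exact Subtype.ext h
      · have hba : -b + a ∈ Δ := by
          have := neg_mem hab
          simpa [neg_add_rev] using this
        exact absurd (haS.2 _ hba (by rwa [neg_add_eq_sub, sub_pos]))
          (not_lt.2 (add_le_iff_nonpos_left.mpr (neg_nonpos.mpr hbS.1)))
    haveI : Finite (Γ ⧸ Δ) := Δ.finite_quotient_of_finiteIndex
    have hcard : Nat.card t = Nat.card (Γ ⧸ Δ) := by
      rw [Nat.card_eq_finsetCard, htcard, AddSubgroup.index_eq_card]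
    have hbij : Function.Bijective fun s : t => QuotientAddGroup.mk (s := Δ) (s : Γ) :=
      (Nat.bijective_iff_injective_and_card _).2 ⟨hinj, hcard⟩
    intro x
    obtain ⟨s, hs⟩ := hbij.2 (QuotientAddGroup.mk x)
    obtain ⟨i, hi⟩ := e.surjective s
    refine ⟨i, ?_⟩
    show x - (e i : Γ) ∈ Δ
    rw [hi]
    have : -((s : Γ)) + x ∈ Δ := QuotientAddGroup.eq.mp hs
    simpa [sub_eq_add_neg, add_comm] using this
  · intro i δ hδ hδpos
    exact ((hmem _).1 (e i).2).2 δ hδ hδpos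
end

section
/- Let μ be a valuation on K[x], fix an extension μ̄ of μ to K̄[x] for an algebraic closure K̄ of K, and for f ∈ K[x] nonconstant set ε(f) = max{μ̄(x − a) : a a root of f in K̄}. If Q is a key polynomial for μ (i.e. monic, and for all f with deg(f) < deg(Q) one has ε(f) < ε(Q)), then the truncation μ_Q is itself a valuation on K[x]. -/
open Polynomial

/-- An (additive, Krull) valuation on a commutative ring `R`, with values in `WithTop Γ`
for a linearly ordered abelian group `Γ`.  (`⊤` plays the role of `∞`; elements of the
support may have value `∞`.) -/
structure AddVal (R : Type*) [CommRing R] (Γ : Type*) [AddCommGroup Γ] [LinearOrder Γ] [IsOrderedAddMonoid Γ] where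
  v : R → WithTop Γ
  v_zero : v 0 = ⊤
  v_one : v 1 = 0
  v_mul : ∀ f g : R, v (f * g) = v f + v g
  v_add : ∀ f g : R, min (v f) (v g) ≤ v (f + g)

/-- `c 0, …, c r` is the `q`-expansion of `f`: all coefficients have degree smaller than
`deg q` and `f = Σ_{ℓ=0}^r c ℓ * q^ℓ`. -/
def IsQExpansion {K : Type*} [Field K] (q f : Polynomial K) (r : ℕ)
    (c : ℕ → Polynomial K) : Prop :=
  (∀ ℓ, (c ℓ).degree < q.degree) ∧ f = ∑ ℓ ∈ Finset.range (r + 1), c ℓ * q ^ ℓ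

/-- `w f` coincides with the truncation `w_q f`, i.e. with the minimum of the values of
the terms of the `q`-expansion of `f`. -/
def TruncEq {K Γ : Type*} [Field K] [AddCommGroup Γ] [LinearOrder Γ] [IsOrderedAddMonoid Γ]
    (w : Polynomial K → WithTop Γ) (q f : Polynomial K) : Prop :=
  ∃ r c, IsQExpansion q f r c ∧
    w f = (Finset.range (r + 1)).inf fun ℓ => w (c ℓ * q ^ ℓ)

/-- A family `Q` of polynomials is a complete set for `w`: every nonzero `f` admits some
`Q i` of degree at most `deg f` with `w f = w_{Q i} f`. -/
def IsCompleteSet {K Γ I : Type*} [Field K] [AddCommGroup Γ] [LinearOrder Γ] [IsOrderedAddMonoid Γ]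
    (w : Polynomial K → WithTop Γ) (Q : I → Polynomial K) : Prop :=
  ∀ f : Polynomial K, f ≠ 0 → ∃ i, (Q i).degree ≤ f.degree ∧ TruncEq w (Q i) f

/-- The monomial `Q^λ = ∏ᵢ (Q i)^(λ i)` attached to a finitely supported multi-index. -/
noncomputable def Qpow {K I : Type*} [Field K] (Q : I → Polynomial K) (l : I →₀ ℕ) : Polynomial K :=
  l.prod fun i n => Q i ^ n

/-- The value group `vL` of a valued field `(L, v)`, as a subgroup of `Γ`. -/
def valueGroupL {L Γ : Type*} [Field L] [AddCommGroup Γ] [LinearOrder Γ] [IsOrderedAddMonoid Γ]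
    (v : AddVal L Γ) : AddSubgroup Γ :=
  AddSubgroup.closure {γ : Γ | ∃ b : L, b ≠ 0 ∧ v.v b = (γ : WithTop Γ)}

/-- The value group `vK` of the restriction of `v` to a subfield `K` of `L`,
as a subgroup of `Γ`. -/
def valueGroupK (K : Type*) {L Γ : Type*} [Field K] [Field L] [Algebra K L]
    [AddCommGroup Γ] [LinearOrder Γ] [IsOrderedAddMonoid Γ] (v : AddVal L Γ) : AddSubgroup Γ :=
  AddSubgroup.closure {γ : Γ | ∃ a : K, a ≠ 0 ∧ v.v (algebraMap K L a) = (γ : WithTop Γ)}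

/-- The ramification index `e(L/K, v) = (vL : vK)`. -/
noncomputable def ramIndex (K : Type*) {L Γ : Type*} [Field K] [Field L] [Algebra K L]
    [AddCommGroup Γ] [LinearOrder Γ] [IsOrderedAddMonoid Γ] (v : AddVal L Γ) : ℕ :=
  (valueGroupK K v).relIndex (valueGroupL v)

/-- The initial index `ε(L/K, v) = |{γ ∈ vL | 0 ≤ γ < (vK)_{>0}}|`. -/
noncomputable def initIndex (K : Type*) {L Γ : Type*} [Field K] [Field L] [Algebra K L]
    [AddCommGroup Γ] [LinearOrder Γ] [IsOrderedAddMonoid Γ] (v : AddVal L Γ) : ℕ :=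
  Nat.card {γ : Γ | γ ∈ valueGroupL v ∧ 0 ≤ γ ∧ ∀ δ ∈ valueGroupK K v, 0 < δ → γ < δ}

/-- `γ` is the value `ε(F) = max {μ̄(x - a) : a a root of F}` for a polynomial `F` over an
algebraically closed field, with respect to a valuation `μ̄` of `K̄[x]`. -/
def IsEpsVal {Kb Γ : Type*} [Field Kb] [AddCommGroup Γ] [LinearOrder Γ] [IsOrderedAddMonoid Γ]
    (μb : AddVal (Polynomial Kb) Γ) (F : Polynomial Kb) (γ : WithTop Γ) : Prop :=
  (∃ a : Kb, F.IsRoot a ∧ μb.v (Polynomial.X - Polynomial.C a) = γ) ∧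
    ∀ a : Kb, F.IsRoot a → μb.v (Polynomial.X - Polynomial.C a) ≤ γ

/-- `Q ∈ K[x]` is a key polynomial for the valuation `μ` of `K[x]` (whose extension to
`K̄[x]` is `μb`): `Q` is monic, nonconstant, and `deg f < deg Q` implies `ε(f) < ε(Q)`. -/
def IsKeyPoly {K Kb Γ : Type*} [Field K] [Field Kb] [Algebra K Kb]
    [AddCommGroup Γ] [LinearOrder Γ] [IsOrderedAddMonoid Γ]
    (μb : AddVal (Polynomial Kb) Γ) (Q : Polynomial K) : Prop :=
  Q.Monic ∧ 0 < Q.degree ∧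
    ∀ f : Polynomial K, f.degree < Q.degree →
      ∀ γf γQ : WithTop Γ,
        IsEpsVal μb (f.map (algebraMap K Kb)) γf →
        IsEpsVal μb (Q.map (algebraMap K Kb)) γQ → γf < γQ

set_option linter.unusedSectionVars false

namespace AddVal

variable {R Γ : Type*} [CommRing R] [AddCommGroup Γ] [LinearOrder Γ] [IsOrderedAddMonoid Γ] (μ : AddVal R Γ)

lemma v_neg_one : μ.v (-1 : R) = 0 := by
  have h1 : μ.v (-1 : R) + μ.v (-1 : R) = 0 := by
    rw [← μ.v_mul]; norm_num [μ.v_one]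
  cases h : μ.v (-1 : R) with
  | top => rw [h] at h1; simp at h1
  | coe γ =>
      rw [h, ← WithTop.coe_add] at h1
      have h2 : γ + γ = 0 := by exact_mod_cast h1
      have h3 : γ = 0 := by
        rcases lt_trichotomy γ 0 with hg | hg | hg
        · exact absurd h2 (ne_of_lt (by simpa using add_lt_add hg hg))
        · exact hg
        · exact absurd h2 (ne_of_gt (by simpa using add_lt_add hg hg))
      simp [h3]

lemma v_neg (f : R) : μ.v (-f) = μ.v f := by
  have : (-f : R) = -1 * f := by ring
  rw [this, μ.v_mul, μ.v_neg_one, zero_add]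

/-- Ultrametric equality when the two values differ. -/
lemma v_add_eq_min {f g : R} (h : μ.v f ≠ μ.v g) : μ.v (f + g) = min (μ.v f) (μ.v g) := by
  have key : ∀ p q : R, μ.v p < μ.v q → μ.v (p + q) = μ.v p := by
    intro p q hlt
    refine le_antisymm ?_ (le_trans (le_min le_rfl hlt.le) (μ.v_add p q))
    have h2 : μ.v p = μ.v (p + q + -q) := by ring_nf
    have h3 : min (μ.v (p + q)) (μ.v (-q)) ≤ μ.v p := h2 ▸ μ.v_add (p+q) (-q)
    rw [μ.v_neg] at h3
    rcases min_le_iff.mp h3 with h4 | h4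
    · exact h4
    · exact absurd h4 (not_le.mpr hlt)
  rcases lt_or_gt_of_ne h with hlt | hlt
  · rw [min_eq_left hlt.le]; exact key f g hlt
  · rw [min_eq_right hlt.le, add_comm]; exact key g f hlt

lemma v_sum_ge {ι : Type*} (s : Finset ι) (F : ι → R) :
    s.inf (fun i => μ.v (F i)) ≤ μ.v (∑ i ∈ s, F i) := by
  classical
  induction s using Finset.induction with
  | empty => simp [μ.v_zero]
  | insert _ _ hx ih =>
      rename_i a s
      rw [Finset.sum_insert hx, Finset.inf_insert]
      exact le_trans (min_le_min le_rfl ih) (μ.v_add _ _)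

/-- A sum with a unique strictly dominant (minimal-value) term has that value. -/
lemma v_sum_eq {ι : Type*} (s : Finset ι) (F : ι → R) (i₀ : ι) (hi₀ : i₀ ∈ s)
    (htop : μ.v (F i₀) ≠ ⊤)
    (hdom : ∀ i ∈ s, i ≠ i₀ → μ.v (F i₀) < μ.v (F i)) :
    μ.v (∑ i ∈ s, F i) = μ.v (F i₀) := by
  classical
  rw [← Finset.add_sum_erase s F hi₀]
  have hrest : μ.v (F i₀) < μ.v (∑ i ∈ s.erase i₀, F i) := by
    refine lt_of_lt_of_le ?_ (μ.v_sum_ge _ _)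
    rw [Finset.lt_inf_iff (lt_top_iff_ne_top.mpr htop)]
    intro i hi
    exact hdom i (Finset.mem_of_mem_erase hi) (Finset.ne_of_mem_erase hi)
  rw [μ.v_add_eq_min hrest.ne, min_eq_left hrest.le]

lemma v_multiset_prod (M : Multiset R) : μ.v M.prod = (M.map μ.v).sum := by
  induction M using Multiset.induction with
  | empty => simp [μ.v_one]
  | cons a M ih => simp [μ.v_mul, ih]

lemma v_pow (p : R) (n : ℕ) : μ.v (p ^ n) = n • μ.v p := by
  induction n with
  | zero => simp [μ.v_one]
  | succ n ih => rw [pow_succ, μ.v_mul, ih, succ_nsmul]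

end AddVal

namespace KeyPolyProof

variable {Kb Γ : Type*} [Field Kb] [AddCommGroup Γ] [LinearOrder Γ] [IsOrderedAddMonoid Γ]

lemma vC_ne_top (μb : AddVal (Polynomial Kb) Γ) {k : Kb} (hk : k ≠ 0) :
    μb.v (C k) ≠ ⊤ := by
  intro h
  have h1 : μb.v (C k) + μb.v (C k⁻¹) = 0 := by
    rw [← μb.v_mul, ← C_mul, mul_inv_cancel₀ hk, C_1, μb.v_one]
  rw [h, top_add] at h1
  exact absurd h1 (by simp)

/-- The `j`-th term value `v(P_j) + j·δ₀` of the Gauss valuation. -/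
noncomputable def tval (μb : AddVal (Polynomial Kb) Γ) (δ₀ : Γ) (P : Polynomial Kb)
    (j : ℕ) : WithTop Γ :=
  μb.v (C (P.coeff j)) + (↑(j • δ₀) : WithTop Γ)

/-- The Gauss valuation (min over term values). -/
noncomputable def G (μb : AddVal (Polynomial Kb) Γ) (δ₀ : Γ) (P : Polynomial Kb) : WithTop Γ :=
  (Finset.range (P.natDegree + 1)).inf (tval μb δ₀ P)

/-- The largest index attaining the minimum. -/
noncomputable def Jx (μb : AddVal (Polynomial Kb) Γ) (δ₀ : Γ) (P : Polynomial Kb) : ℕ :=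
  WithBot.unbotD 0 (((Finset.range (P.natDegree + 1)).filter
    (fun j => tval μb δ₀ P j = G μb δ₀ P)).max)

variable (μb : AddVal (Polynomial Kb) Γ) (δ₀ : Γ)

lemma tval_eq_top_of_gt {P : Polynomial Kb} {j : ℕ} (h : P.natDegree < j) :
    tval μb δ₀ P j = ⊤ := by
  rw [tval, Polynomial.coeff_eq_zero_of_natDegree_lt h, C_0, μb.v_zero, top_add]

lemma G_le (P : Polynomial Kb) (j : ℕ) : G μb δ₀ P ≤ tval μb δ₀ P j := by
  rcases le_or_gt j P.natDegree with h | h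
  · exact Finset.inf_le (Finset.mem_range.mpr (Nat.lt_succ_of_le h))
  · rw [tval_eq_top_of_gt μb δ₀ h]; exact le_top

lemma G_ne_top {P : Polynomial Kb} (hP : P ≠ 0) : G μb δ₀ P ≠ ⊤ := by
  have h1 : tval μb δ₀ P P.natDegree ≠ ⊤ := by
    rw [tval]
    exact WithTop.add_ne_top.mpr ⟨vC_ne_top μb (Polynomial.leadingCoeff_ne_zero.mpr hP),
      WithTop.coe_ne_top⟩
  exact fun h => h1 (eq_top_iff.mpr (h ▸ G_le μb δ₀ P P.natDegree))

lemma Jx_spec {P : Polynomial Kb} (hP : P ≠ 0) :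
    tval μb δ₀ P (Jx μb δ₀ P) = G μb δ₀ P ∧
      ∀ j, Jx μb δ₀ P < j → G μb δ₀ P < tval μb δ₀ P j := by
  classical
  set F := (Finset.range (P.natDegree + 1)).filter
    (fun j => tval μb δ₀ P j = G μb δ₀ P) with hF
  have hFne : F.Nonempty := by
    obtain ⟨i, hi, hieq⟩ := Finset.exists_mem_eq_inf (Finset.range (P.natDegree + 1))
      ⟨0, Finset.mem_range.mpr (Nat.succ_pos _)⟩ (tval μb δ₀ P)
    exact ⟨i, Finset.mem_filter.mpr ⟨hi, hieq.symm⟩⟩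
  obtain ⟨a, ha⟩ := Finset.max_of_nonempty hFne
  have hJ : Jx μb δ₀ P = a := by rw [Jx, ← hF, ha]; rfl
  have haF : a ∈ F := Finset.mem_of_max ha
  constructor
  · rw [hJ]; exact (Finset.mem_filter.mp haF).2
  · intro j hj
    rw [hJ] at hj
    rcases lt_or_ge P.natDegree j with h | h
    · rw [tval_eq_top_of_gt μb δ₀ h]
      exact lt_top_iff_ne_top.mpr (G_ne_top μb δ₀ hP)
    · refine lt_of_le_of_ne (G_le μb δ₀ P j) fun heq => ?_
      have hjF : j ∈ F := Finset.mem_filter.mpr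
        ⟨Finset.mem_range.mpr (Nat.lt_succ_of_le h), heq.symm⟩
      exact absurd (Finset.le_max hjF) (by rw [ha]; exact_mod_cast not_le.mpr hj)

lemma Jx_eq_of {P : Polynomial Kb} (hP : P ≠ 0) {m : ℕ}
    (hm : tval μb δ₀ P m = G μb δ₀ P)
    (hmax : ∀ j, m < j → G μb δ₀ P < tval μb δ₀ P j) : Jx μb δ₀ P = m := by
  obtain ⟨h1, h2⟩ := Jx_spec μb δ₀ hP
  rcases lt_trichotomy (Jx μb δ₀ P) m with h | h | h
  · exact absurd hm (ne_of_gt (h2 m h))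
  · exact h
  · exact absurd h1 (ne_of_gt (hmax _ h))

end KeyPolyProof

namespace KeyPolyProof

section WT
variable {Γ : Type*} [AddCommGroup Γ] [LinearOrder Γ] [IsOrderedAddMonoid Γ]

lemma wt_add_lt_add {a b s t : WithTop Γ} (ha : a ≠ ⊤) (hb : b ≠ ⊤)
    (hs : a ≤ s) (ht : b < t) : a + b < s + t := by
  lift a to Γ using ha
  lift b to Γ using hb
  cases s with
  | top => rw [top_add]; exact lt_top_iff_ne_top.mpr (WithTop.add_ne_top.mpr ⟨WithTop.coe_ne_top, WithTop.coe_ne_top⟩)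
  | coe s =>
    cases t with
    | top => rw [add_top]; exact lt_top_iff_ne_top.mpr (WithTop.add_ne_top.mpr ⟨WithTop.coe_ne_top, WithTop.coe_ne_top⟩)
    | coe t =>
      rw [← WithTop.coe_add, ← WithTop.coe_add, WithTop.coe_lt_coe]
      exact add_lt_add_of_le_of_lt (WithTop.coe_le_coe.mp hs) (WithTop.coe_lt_coe.mp ht)

lemma wt_add_lt_add' {a b s t : WithTop Γ} (ha : a ≠ ⊤) (hb : b ≠ ⊤)
    (hs : a < s) (ht : b ≤ t) : a + b < s + t := by
  rw [add_comm a b, add_comm s t]; exact wt_add_lt_add hb ha ht hs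

end WT

variable {Kb Γ : Type*} [Field Kb] [AddCommGroup Γ] [LinearOrder Γ] [IsOrderedAddMonoid Γ]
variable (μb : AddVal (Polynomial Kb) Γ) (δ₀ : Γ)

/-- rearrangement: `tval` of a product of coefficients. -/
lemma tval_pair (P P' : Polynomial Kb) (i k : ℕ) :
    μb.v (C (P.coeff i * P'.coeff k)) + (↑((i + k) • δ₀) : WithTop Γ) =
      tval μb δ₀ P i + tval μb δ₀ P' k := by
  rw [C_mul, μb.v_mul, tval, tval, add_nsmul, WithTop.coe_add, add_add_add_comm]

lemma coeff_ne_zero_of_tval {P : Polynomial Kb} {j : ℕ}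
    (h : tval μb δ₀ P j ≠ ⊤) : P.coeff j ≠ 0 := by
  intro h0
  rw [tval, h0, C_0, μb.v_zero, top_add] at h
  exact h rfl

/-- lower bound: every pair term value is at least `G P + G P'`. -/
lemma pair_ge (P P' : Polynomial Kb) (i k : ℕ) :
    G μb δ₀ P + G μb δ₀ P' ≤ tval μb δ₀ P i + tval μb δ₀ P' k :=
  add_le_add (G_le μb δ₀ P i) (G_le μb δ₀ P' k)

/-- strict lower bound when one index is beyond the top attaining index. -/
lemma pair_gt {P P' : Polynomial Kb} (hP : P ≠ 0) (hP' : P' ≠ 0) {i k : ℕ}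
    (h : Jx μb δ₀ P < i ∨ Jx μb δ₀ P' < k) :
    G μb δ₀ P + G μb δ₀ P' < tval μb δ₀ P i + tval μb δ₀ P' k := by
  rcases h with h | h
  · exact wt_add_lt_add' (G_ne_top μb δ₀ hP) (G_ne_top μb δ₀ hP')
      ((Jx_spec μb δ₀ hP).2 i h) (G_le μb δ₀ P' k)
  · exact wt_add_lt_add (G_ne_top μb δ₀ hP) (G_ne_top μb δ₀ hP')
      (G_le μb δ₀ P i) ((Jx_spec μb δ₀ hP').2 k h)

lemma tval_mul_ge (P P' : Polynomial Kb) (n : ℕ) :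
    G μb δ₀ P + G μb δ₀ P' ≤ tval μb δ₀ (P * P') n := by
  classical
  rw [tval, Polynomial.coeff_mul]
  have h1 : (Finset.HasAntidiagonal.antidiagonal n).inf
      (fun x => μb.v (C (P.coeff x.1 * P'.coeff x.2))) ≤ μb.v (C (∑ x ∈ Finset.HasAntidiagonal.antidiagonal n, P.coeff x.1 * P'.coeff x.2)) := by
    have := μb.v_sum_ge (Finset.HasAntidiagonal.antidiagonal n) (fun x => C (P.coeff x.1 * P'.coeff x.2))
    simpa [C_eq_natCast, map_sum] using this
  refine le_trans ?_ (add_le_add_left h1 _)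
  obtain ⟨x, hx, hxeq⟩ := Finset.exists_mem_eq_inf (Finset.HasAntidiagonal.antidiagonal n)
    ⟨(0, n), by simp⟩ (fun x => μb.v (C (P.coeff x.1 * P'.coeff x.2)))
  rw [hxeq]
  have hn : x.1 + x.2 = n := Finset.HasAntidiagonal.mem_antidiagonal.mp hx
  rw [← hn, tval_pair]
  exact pair_ge μb δ₀ P P' x.1 x.2

lemma tval_mul_at {P P' : Polynomial Kb} (hP : P ≠ 0) (hP' : P' ≠ 0) :
    tval μb δ₀ (P * P') (Jx μb δ₀ P + Jx μb δ₀ P') = G μb δ₀ P + G μb δ₀ P' := by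
  classical
  set jp := Jx μb δ₀ P
  set jq := Jx μb δ₀ P'
  have hGG : G μb δ₀ P + G μb δ₀ P' ≠ ⊤ :=
    WithTop.add_ne_top.mpr ⟨G_ne_top μb δ₀ hP, G_ne_top μb δ₀ hP'⟩
  have hpair : μb.v (C (P.coeff jp * P'.coeff jq)) + (↑((jp + jq) • δ₀) : WithTop Γ) =
      G μb δ₀ P + G μb δ₀ P' := by
    rw [tval_pair, (Jx_spec μb δ₀ hP).1, (Jx_spec μb δ₀ hP').1]
  have hvtop : μb.v (C (P.coeff jp * P'.coeff jq)) ≠ ⊤ := by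
    intro h; rw [h, top_add] at hpair; exact hGG hpair.symm
  rw [tval, Polynomial.coeff_mul]
  have hcoeff : μb.v (C (∑ x ∈ Finset.HasAntidiagonal.antidiagonal (jp + jq), P.coeff x.1 * P'.coeff x.2)) =
      μb.v (C (P.coeff jp * P'.coeff jq)) := by
    rw [map_sum C]
    refine μb.v_sum_eq _ _ (jp, jq) (by simp) hvtop ?_
    intro x hx hne
    have hn : x.1 + x.2 = jp + jq := Finset.HasAntidiagonal.mem_antidiagonal.mp hx
    have hor : jp < x.1 ∨ jq < x.2 := by
      rcases lt_trichotomy x.1 jp with h | h | h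
      · right; omega
      · exfalso; apply hne; have : x.2 = jq := by omega
        exact Prod.ext h this
      · left; exact h
    have h2 := pair_gt μb δ₀ hP hP' hor
    rw [← tval_pair, hn] at h2
    rw [← hpair] at h2
    exact lt_of_add_lt_add_right h2
  rw [hcoeff, hpair]

lemma G_mul {P P' : Polynomial Kb} (hP : P ≠ 0) (hP' : P' ≠ 0) :
    G μb δ₀ (P * P') = G μb δ₀ P + G μb δ₀ P' := by
  refine le_antisymm ?_ ?_
  · rw [← tval_mul_at μb δ₀ hP hP']
    exact G_le μb δ₀ _ _
  · refine Finset.le_inf fun n _ => tval_mul_ge μb δ₀ P P' n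

lemma tval_mul_gt {P P' : Polynomial Kb} (hP : P ≠ 0) (hP' : P' ≠ 0) {n : ℕ}
    (hn : Jx μb δ₀ P + Jx μb δ₀ P' < n) :
    G μb δ₀ P + G μb δ₀ P' < tval μb δ₀ (P * P') n := by
  classical
  have hGG : G μb δ₀ P + G μb δ₀ P' ≠ ⊤ :=
    WithTop.add_ne_top.mpr ⟨G_ne_top μb δ₀ hP, G_ne_top μb δ₀ hP'⟩
  rw [tval, Polynomial.coeff_mul, map_sum C]
  have h1 : G μb δ₀ P + G μb δ₀ P' <
      μb.v (∑ x ∈ Finset.HasAntidiagonal.antidiagonal n, C (P.coeff x.1 * P'.coeff x.2)) + (↑(n • δ₀) : WithTop Γ) := by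
    refine lt_of_lt_of_le ?_ (add_le_add_left (μb.v_sum_ge _ _) _)
    have hne : (Finset.HasAntidiagonal.antidiagonal n).Nonempty := ⟨(0, n), by simp⟩
    obtain ⟨x, hx, hxeq⟩ := Finset.exists_mem_eq_inf (Finset.HasAntidiagonal.antidiagonal n) hne
      (fun x => μb.v (C (P.coeff x.1 * P'.coeff x.2)))
    rw [hxeq]
    have hsum : x.1 + x.2 = n := Finset.HasAntidiagonal.mem_antidiagonal.mp hx
    have hor : Jx μb δ₀ P < x.1 ∨ Jx μb δ₀ P' < x.2 := by omega
    have := pair_gt μb δ₀ hP hP' hor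
    rw [← tval_pair, hsum] at this
    exact this
  exact h1

lemma Jx_mul {P P' : Polynomial Kb} (hP : P ≠ 0) (hP' : P' ≠ 0) :
    Jx μb δ₀ (P * P') = Jx μb δ₀ P + Jx μb δ₀ P' := by
  refine Jx_eq_of μb δ₀ (mul_ne_zero hP hP') ?_ ?_
  · rw [tval_mul_at μb δ₀ hP hP', G_mul μb δ₀ hP hP']
  · intro j hj
    rw [G_mul μb δ₀ hP hP']
    exact tval_mul_gt μb δ₀ hP hP' hj

end KeyPolyProof

namespace KeyPolyProof

variable {Kb Γ : Type*} [Field Kb] [AddCommGroup Γ] [LinearOrder Γ] [IsOrderedAddMonoid Γ]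

/-- The disk valuation centered at `b₀` of radius `δ₀`. -/
noncomputable def V (μb : AddVal (Polynomial Kb) Γ) (δ₀ : Γ) (b₀ : Kb)
    (F : Polynomial Kb) : WithTop Γ := G μb δ₀ (taylor b₀ F)

noncomputable def JV (μb : AddVal (Polynomial Kb) Γ) (δ₀ : Γ) (b₀ : Kb)
    (F : Polynomial Kb) : ℕ := Jx μb δ₀ (taylor b₀ F)

variable (μb : AddVal (Polynomial Kb) Γ) (δ₀ : Γ) (b₀ : Kb)

lemma taylor_ne_zero' {F : Polynomial Kb} (hF : F ≠ 0) : taylor b₀ F ≠ 0 := by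
  intro h
  apply hF
  have := congrArg (taylor (-b₀)) h
  rwa [taylor_taylor, neg_add_cancel, taylor_zero, map_zero] at this

lemma V_ne_top {F : Polynomial Kb} (hF : F ≠ 0) : V μb δ₀ b₀ F ≠ ⊤ :=
  G_ne_top μb δ₀ (taylor_ne_zero' b₀ hF)

lemma V_zero : V μb δ₀ b₀ 0 = ⊤ := by
  rw [V, map_zero, G]
  simp [tval, μb.v_zero]

lemma V_mul {F F' : Polynomial Kb} (hF : F ≠ 0) (hF' : F' ≠ 0) :
    V μb δ₀ b₀ (F * F') = V μb δ₀ b₀ F + V μb δ₀ b₀ F' := by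
  rw [V, taylor_mul, G_mul μb δ₀ (taylor_ne_zero' b₀ hF) (taylor_ne_zero' b₀ hF')]; rfl

lemma JV_mul {F F' : Polynomial Kb} (hF : F ≠ 0) (hF' : F' ≠ 0) :
    JV μb δ₀ b₀ (F * F') = JV μb δ₀ b₀ F + JV μb δ₀ b₀ F' := by
  rw [JV, taylor_mul, Jx_mul μb δ₀ (taylor_ne_zero' b₀ hF) (taylor_ne_zero' b₀ hF')]; rfl

lemma V_C (k : Kb) (hk : k ≠ 0) : V μb δ₀ b₀ (C k) = μb.v (C k) ∧ JV μb δ₀ b₀ (C k) = 0 := by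
  have ht : taylor b₀ (C k) = C k := taylor_C b₀ k
  have hdeg : (taylor b₀ (C k)).natDegree = 0 := by rw [ht]; exact natDegree_C k
  have htv : tval μb δ₀ (taylor b₀ (C k)) 0 = μb.v (C k) := by
    rw [tval, ht, coeff_C_zero, zero_smul, WithTop.coe_zero, add_zero]
  have hG : G μb δ₀ (taylor b₀ (C k)) = μb.v (C k) := by
    rw [G, hdeg]
    simp only [zero_add, Finset.range_one, Finset.inf_singleton]
    exact htv
  refine ⟨hG, ?_⟩
  refine Jx_eq_of μb δ₀ (taylor_ne_zero' b₀ (by simp [hk])) (htv.trans hG.symm) ?_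
  intro j hj
  rw [hG, tval_eq_top_of_gt μb δ₀ (by omega)]
  exact lt_top_iff_ne_top.mpr (vC_ne_top μb hk)

lemma taylor_linear (a : Kb) : taylor b₀ (X - C a) = X + C (b₀ - a) := by
  rw [taylor_apply, sub_comp, X_comp, C_comp, C_sub]
  ring

end KeyPolyProof

namespace KeyPolyProof

variable {Kb Γ : Type*} [Field Kb] [AddCommGroup Γ] [LinearOrder Γ] [IsOrderedAddMonoid Γ]
variable (μb : AddVal (Polynomial Kb) Γ) (δ₀ : Γ) (b₀ : Kb)

lemma linear_sub_linear (a : Kb) : (X - C a) - (X - C b₀) = C (b₀ - a) := by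
  rw [C_sub]; ring

section Linear

variable (hδ : μb.v (X - C b₀) = (δ₀ : WithTop Γ))

lemma tval_linear_zero (a : Kb) :
    tval μb δ₀ (taylor b₀ (X - C a)) 0 = μb.v (C (b₀ - a)) := by
  rw [tval, taylor_linear]
  simp [μb.v_zero]

lemma tval_linear_one (a : Kb) :
    tval μb δ₀ (taylor b₀ (X - C a)) 1 = (δ₀ : WithTop Γ) := by
  rw [tval, taylor_linear]
  have h1 : (X + C (b₀ - a)).coeff 1 = 1 := by simp [coeff_X_one]
  rw [h1, C_1, μb.v_one, zero_add, one_smul]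

lemma natDegree_taylor_linear (a : Kb) : (taylor b₀ (X - C a)).natDegree = 1 := by
  rw [taylor_linear, natDegree_X_add_C]

lemma G_linear (a : Kb) :
    G μb δ₀ (taylor b₀ (X - C a)) = min (μb.v (C (b₀ - a))) (δ₀ : WithTop Γ) := by
  rw [G, natDegree_taylor_linear]
  rw [show Finset.range (1 + 1) = {0, 1} by rfl]
  rw [Finset.inf_insert, Finset.inf_singleton, tval_linear_zero, tval_linear_one]

include hδ

lemma V_linear_lt {a : Kb} (ha : μb.v (X - C a) < (δ₀ : WithTop Γ)) :
    V μb δ₀ b₀ (X - C a) = μb.v (X - C a) ∧ JV μb δ₀ b₀ (X - C a) = 0 := by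
  have hvC : μb.v (C (b₀ - a)) = μb.v (X - C a) := by
    have hrw : C (b₀ - a) = (X - C a) + (-(X - C b₀)) := by
      rw [← linear_sub_linear b₀ a]; ring
    have hne : μb.v (X - C a) ≠ μb.v (-(X - C b₀)) := by
      rw [μb.v_neg, hδ]; exact ne_of_lt ha
    rw [hrw, μb.v_add_eq_min hne, μb.v_neg, hδ, min_eq_left ha.le]
  have hG : V μb δ₀ b₀ (X - C a) = μb.v (X - C a) := by
    rw [V, G_linear, hvC, min_eq_left ha.le]
  refine ⟨hG, ?_⟩
  have hne0 : (X - C a) ≠ 0 := X_sub_C_ne_zero a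
  refine Jx_eq_of μb δ₀ (taylor_ne_zero' b₀ hne0) ?_ ?_
  · rw [tval_linear_zero, hvC]; exact hG.symm ▸ rfl
  · intro j hj
    have hGv : G μb δ₀ (taylor b₀ (X - C a)) = μb.v (X - C a) := hG
    rcases Nat.lt_or_ge j 2 with h2 | h2
    · have : j = 1 := by omega
      rw [this, tval_linear_one, hGv]
      exact ha
    · rw [tval_eq_top_of_gt μb δ₀ (by rw [natDegree_taylor_linear]; omega), hGv]
      exact lt_top_iff_ne_top.mpr (fun h => V_ne_top μb δ₀ b₀ hne0 (hG.trans h))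

lemma V_linear_eq {a : Kb} (ha : μb.v (X - C a) = (δ₀ : WithTop Γ)) :
    V μb δ₀ b₀ (X - C a) = μb.v (X - C a) ∧ JV μb δ₀ b₀ (X - C a) = 1 := by
  have hvC : (δ₀ : WithTop Γ) ≤ μb.v (C (b₀ - a)) := by
    have hrw : C (b₀ - a) = (X - C a) + (-(X - C b₀)) := by
      rw [← linear_sub_linear b₀ a]; ring
    have := μb.v_add (X - C a) (-(X - C b₀))
    rw [μb.v_neg, hδ, ha, min_self, ← hrw] at this
    exact this
  have hG : V μb δ₀ b₀ (X - C a) = (δ₀ : WithTop Γ) := by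
    rw [V, G_linear, min_eq_right hvC]
  refine ⟨hG.trans ha.symm, ?_⟩
  have hne0 : (X - C a) ≠ 0 := X_sub_C_ne_zero a
  refine Jx_eq_of μb δ₀ (taylor_ne_zero' b₀ hne0) ?_ ?_
  · rw [tval_linear_one]; exact hG.symm
  · intro j hj
    rw [tval_eq_top_of_gt μb δ₀ (by rw [natDegree_taylor_linear]; omega)]
    have : G μb δ₀ (taylor b₀ (X - C a)) = (δ₀ : WithTop Γ) := hG
    rw [this]
    exact WithTop.coe_lt_top δ₀

lemma V_linear_le {a : Kb} (ha : μb.v (X - C a) ≤ (δ₀ : WithTop Γ)) :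
    V μb δ₀ b₀ (X - C a) = μb.v (X - C a) := by
  rcases lt_or_eq_of_le ha with h | h
  · exact (V_linear_lt μb δ₀ b₀ hδ h).1
  · exact (V_linear_eq μb δ₀ b₀ hδ h).1

end Linear

end KeyPolyProof

namespace KeyPolyProof

variable {Kb Γ : Type*} [Field Kb] [IsAlgClosed Kb] [AddCommGroup Γ] [LinearOrder Γ] [IsOrderedAddMonoid Γ]
variable (μb : AddVal (Polynomial Kb) Γ) (δ₀ : Γ) (b₀ : Kb)
variable (hδ : μb.v (X - C b₀) = (δ₀ : WithTop Γ))

lemma prod_linear_ne_zero (M : Multiset Kb) :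
    (M.map (fun a => X - C a)).prod ≠ (0 : Polynomial Kb) := by
  refine Multiset.prod_ne_zero ?_
  intro h0
  obtain ⟨a, _, ha⟩ := Multiset.mem_map.mp h0
  exact X_sub_C_ne_zero a ha

include hδ

lemma V_prod_linear (M : Multiset Kb) (h : ∀ a ∈ M, μb.v (X - C a) ≤ (δ₀ : WithTop Γ)) :
    V μb δ₀ b₀ (M.map (fun a => X - C a)).prod =
      μb.v (M.map (fun a => X - C a)).prod := by
  induction M using Multiset.induction with
  | empty => simp [V, taylor_one, G, tval, μb.v_one, μb.v_zero]
  | cons a M ih =>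
      rw [Multiset.map_cons, Multiset.prod_cons,
        V_mul μb δ₀ b₀ (X_sub_C_ne_zero a) (prod_linear_ne_zero M), μb.v_mul,
        V_linear_le μb δ₀ b₀ hδ (h a (Multiset.mem_cons_self a M)),
        ih (fun x hx => h x (Multiset.mem_cons_of_mem hx))]

lemma JV_prod_linear_zero (M : Multiset Kb)
    (h : ∀ a ∈ M, μb.v (X - C a) < (δ₀ : WithTop Γ)) :
    JV μb δ₀ b₀ (M.map (fun a => X - C a)).prod = 0 := by
  induction M using Multiset.induction with
  | empty =>
      simp only [Multiset.map_zero, Multiset.prod_zero]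
      have := V_C μb δ₀ b₀ (1 : Kb) one_ne_zero
      simpa using this.2
  | cons a M ih =>
      rw [Multiset.map_cons, Multiset.prod_cons,
        JV_mul μb δ₀ b₀ (X_sub_C_ne_zero a) (prod_linear_ne_zero M),
        (V_linear_lt μb δ₀ b₀ hδ (h a (Multiset.mem_cons_self a M))).2,
        ih (fun x hx => h x (Multiset.mem_cons_of_mem hx))]

/-- If all roots of `F` lie within distance `δ₀` of `b₀`, the disk valuation agrees
with `μb` on `F`. -/
lemma V_eq_mu {F : Polynomial Kb} (hF : F ≠ 0)
    (h : ∀ a ∈ F.roots, μb.v (X - C a) ≤ (δ₀ : WithTop Γ)) :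
    V μb δ₀ b₀ F = μb.v F := by
  have hfac := (IsAlgClosed.splits F).eq_prod_roots
  have hlc : F.leadingCoeff ≠ 0 := leadingCoeff_ne_zero.mpr hF
  calc V μb δ₀ b₀ F = V μb δ₀ b₀ (C F.leadingCoeff * (F.roots.map (fun a => X - C a)).prod) := by
        rw [← hfac]
    _ = μb.v (C F.leadingCoeff) + μb.v (F.roots.map (fun a => X - C a)).prod := by
        rw [V_mul μb δ₀ b₀ (by simp [hlc]) (prod_linear_ne_zero (F.roots)),
          (V_C μb δ₀ b₀ _ hlc).1, V_prod_linear μb δ₀ b₀ hδ _ h]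
    _ = μb.v F := by rw [← μb.v_mul, ← hfac]

lemma JV_eq_zero {F : Polynomial Kb} (hF : F ≠ 0)
    (h : ∀ a ∈ F.roots, μb.v (X - C a) < (δ₀ : WithTop Γ)) :
    JV μb δ₀ b₀ F = 0 := by
  have hfac := (IsAlgClosed.splits F).eq_prod_roots
  have hlc : F.leadingCoeff ≠ 0 := leadingCoeff_ne_zero.mpr hF
  calc JV μb δ₀ b₀ F = JV μb δ₀ b₀ (C F.leadingCoeff * (F.roots.map (fun a => X - C a)).prod) := by
        rw [← hfac]
    _ = 0 := by
        rw [JV_mul μb δ₀ b₀ (by simp [hlc]) (prod_linear_ne_zero (F.roots)),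
          (V_C μb δ₀ b₀ _ hlc).2, JV_prod_linear_zero μb δ₀ b₀ hδ _ h]

lemma JV_pos {F : Polynomial Kb} (hF : F ≠ 0) (hb : b₀ ∈ F.roots) :
    1 ≤ JV μb δ₀ b₀ F := by
  have hfac := (IsAlgClosed.splits F).eq_prod_roots
  have hlc : F.leadingCoeff ≠ 0 := leadingCoeff_ne_zero.mpr hF
  obtain ⟨M, hM⟩ := Multiset.exists_cons_of_mem hb
  have hJ : JV μb δ₀ b₀ F =
      JV μb δ₀ b₀ (C F.leadingCoeff) + (JV μb δ₀ b₀ (X - C b₀) +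
        JV μb δ₀ b₀ (M.map (fun a => X - C a)).prod) := by
    conv_lhs => rw [hfac, hM]
    rw [Multiset.map_cons, Multiset.prod_cons,
      JV_mul μb δ₀ b₀ (by simp [hlc]) (mul_ne_zero (X_sub_C_ne_zero b₀) (prod_linear_ne_zero M)),
      JV_mul μb δ₀ b₀ (X_sub_C_ne_zero b₀) (prod_linear_ne_zero M)]
  rw [hJ, (V_linear_eq μb δ₀ b₀ hδ hδ).2]
  omega

end KeyPolyProof

namespace KeyPolyProof

/-- Existence of `Q`-expansions. -/
lemma exists_expansion {K : Type*} [Field K] (Q : Polynomial K) (hQ : Q.Monic)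
    (hdeg : 0 < Q.degree) (f : Polynomial K) : ∃ r c, IsQExpansion Q f r c := by
  have hbot : (⊥ : WithBot ℕ) < Q.degree := lt_of_le_of_lt bot_le hdeg
  obtain ⟨n, hn⟩ : ∃ n, f.natDegree = n := ⟨_, rfl⟩
  induction n using Nat.strong_induction_on generalizing f with
  | _ n ih =>
    by_cases hlt : f.degree < Q.degree
    · refine ⟨0, fun ℓ => if ℓ = 0 then f else 0, fun ℓ => ?_, by simp⟩
      by_cases h0 : ℓ = 0 <;> simp [h0, hlt, degree_zero, hbot]
    · have hf : f ≠ 0 := by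
        intro h; rw [h] at hlt; exact hlt (by simpa [degree_zero] using hbot)
      have hdiv : f /ₘ Q ≠ 0 := by
        intro h0
        have := modByMonic_add_div f Q
        rw [h0, mul_zero, add_zero] at this
        exact hlt (this ▸ degree_modByMonic_lt f hQ)
      have hlt2 : (f /ₘ Q).natDegree < n := by
        rw [← hn]
        exact natDegree_lt_natDegree hdiv (degree_divByMonic_lt f Q hf hdeg)
      obtain ⟨r, c, hc, hsum⟩ := ih _ hlt2 (f /ₘ Q) rfl
      refine ⟨r + 1, fun ℓ => if ℓ = 0 then f %ₘ Q else c (ℓ - 1), fun ℓ => ?_, ?_⟩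
      · by_cases h0 : ℓ = 0 <;> simp [h0, degree_modByMonic_lt f hQ, hc]
      · rw [Finset.sum_range_succ']
        simp only [if_pos rfl, Nat.add_sub_cancel, pow_zero, mul_one]
        have : ∀ i, (if i + 1 = 0 then f %ₘ Q else c i) * Q ^ (i + 1) = Q * (c i * Q ^ i) := by
          intro i; simp [pow_succ]; ring
        rw [Finset.sum_congr rfl (fun i _ => this i), ← Finset.mul_sum, ← hsum, add_comm]
        exact (modByMonic_add_div f Q).symm

variable {Kb Γ : Type*} [Field Kb] [IsAlgClosed Kb] [AddCommGroup Γ] [LinearOrder Γ] [IsOrderedAddMonoid Γ]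
variable (μb : AddVal (Polynomial Kb) Γ)

/-- Existence of a root of maximal value. -/
lemma exists_eps {F : Polynomial Kb} (hF : F ≠ 0) (hroots : F.roots ≠ 0) :
    ∃ b₀ ∈ F.roots, IsEpsVal μb F (μb.v (X - C b₀)) := by
  classical
  obtain ⟨b₀, hmem, hmax⟩ := Finset.exists_max_image F.roots.toFinset
    (fun a => μb.v (X - C a)) (by rwa [Multiset.toFinset_nonempty])
  have hb₀ : b₀ ∈ F.roots := Multiset.mem_toFinset.mp hmem
  refine ⟨b₀, hb₀, ⟨b₀, isRoot_of_mem_roots hb₀, rfl⟩, fun a ha => ?_⟩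
  exact hmax a (Multiset.mem_toFinset.mpr ((mem_roots hF).mpr ha))

end KeyPolyProof

namespace KeyPolyProof

section MoreV

variable {Kb Γ : Type*} [Field Kb] [AddCommGroup Γ] [LinearOrder Γ] [IsOrderedAddMonoid Γ]
variable (μb : AddVal (Polynomial Kb) Γ) (δ₀ : Γ) (b₀ : Kb)

lemma V_pow {F : Polynomial Kb} (hF : F ≠ 0) (n : ℕ) :
    V μb δ₀ b₀ (F ^ n) = n • V μb δ₀ b₀ F ∧ JV μb δ₀ b₀ (F ^ n) = n * JV μb δ₀ b₀ F := by
  induction n with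
  | zero =>
      simp only [pow_zero, zero_smul, Nat.zero_mul]
      have h1 := V_C μb δ₀ b₀ (1 : Kb) one_ne_zero
      rw [C_1] at h1
      rw [h1.1, μb.v_one]
      exact ⟨rfl, h1.2⟩
  | succ n ih =>
      rw [pow_succ]
      rw [V_mul μb δ₀ b₀ (pow_ne_zero n hF) hF, JV_mul μb δ₀ b₀ (pow_ne_zero n hF) hF,
        ih.1, ih.2, succ_nsmul]
      exact ⟨rfl, by ring⟩

lemma G_add_ge (P P' : Polynomial Kb) :
    min (G μb δ₀ P) (G μb δ₀ P') ≤ G μb δ₀ (P + P') := by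
  refine Finset.le_inf fun j _ => ?_
  have h1 : tval μb δ₀ P j ≤ tval μb δ₀ (P + P') j ∨
      tval μb δ₀ P' j ≤ tval μb δ₀ (P + P') j := by
    have hco : (P + P').coeff j = P.coeff j + P'.coeff j := coeff_add P P' j
    have hv := μb.v_add (C (P.coeff j)) (C (P'.coeff j))
    rw [← C_add, ← hco] at hv
    rcases min_le_iff.mp (le_refl (min (μb.v (C (P.coeff j))) (μb.v (C (P'.coeff j))))) with h | h
    · left; exact add_le_add_left (le_trans h hv) _
    · right; exact add_le_add_left (le_trans h hv) _
  rcases h1 with h | h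
  · exact le_trans (min_le_left _ _) (le_trans (G_le μb δ₀ P j) h)
  · exact le_trans (min_le_right _ _) (le_trans (G_le μb δ₀ P' j) h)

lemma V_add_ge (F F' : Polynomial Kb) :
    min (V μb δ₀ b₀ F) (V μb δ₀ b₀ F') ≤ V μb δ₀ b₀ (F + F') := by
  have h := G_add_ge μb δ₀ (taylor b₀ F) (taylor b₀ F')
  rw [← map_add] at h
  exact h

lemma V_sum_ge {ι : Type*} (s : Finset ι) (F : ι → Polynomial Kb) :
    s.inf (fun i => V μb δ₀ b₀ (F i)) ≤ V μb δ₀ b₀ (∑ i ∈ s, F i) := by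
  classical
  induction s using Finset.induction with
  | empty => simp [V_zero]
  | insert _ _ hx ih =>
      rename_i a s
      rw [Finset.sum_insert hx, Finset.inf_insert]
      exact le_trans (min_le_min le_rfl ih) (V_add_ge μb δ₀ b₀ _ _)

end MoreV

/-- Padding a `Q`-expansion to larger length. -/
lemma pad_expansion {K : Type*} [Field K] {Q f : Polynomial K} {r r' : ℕ} {c : ℕ → Polynomial K}
    (hQ : (⊥ : WithBot ℕ) < Q.degree)
    (h : IsQExpansion Q f r c) (hrr : r ≤ r') :
    IsQExpansion Q f r' (fun ℓ => if ℓ ≤ r then c ℓ else 0) := by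
  obtain ⟨hc, hsum⟩ := h
  constructor
  · intro ℓ
    by_cases hℓ : ℓ ≤ r <;> simp [hℓ, hc, degree_zero, hQ]
  · rw [hsum]
    have h2 : ∑ ℓ ∈ Finset.range (r+1), c ℓ * Q ^ ℓ
        = ∑ ℓ ∈ Finset.range (r+1), (if ℓ ≤ r then c ℓ else 0) * Q ^ ℓ :=
      Finset.sum_congr rfl fun ℓ hℓ => by
        rw [if_pos (Nat.lt_succ_iff.mp (Finset.mem_range.mp hℓ))]
    rw [h2]
    refine Finset.sum_subset (Finset.range_subset_range.mpr (by omega)) ?_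
    intro ℓ _ hℓ
    show (if ℓ ≤ r then c ℓ else 0) * Q ^ ℓ = 0
    rw [if_neg (by simp only [Finset.mem_range] at hℓ; omega), zero_mul]

end KeyPolyProof

namespace KeyPolyProof
variable {Kb Γ : Type*} [Field Kb] [AddCommGroup Γ] [LinearOrder Γ] [IsOrderedAddMonoid Γ]
lemma V_def (μb : AddVal (Polynomial Kb) Γ) (δ₀ : Γ) (b₀ : Kb) (F : Polynomial Kb) :
    V μb δ₀ b₀ F = G μb δ₀ (taylor b₀ F) := rfl
lemma JV_def (μb : AddVal (Polynomial Kb) Γ) (δ₀ : Γ) (b₀ : Kb) (F : Polynomial Kb) :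
    JV μb δ₀ b₀ F = Jx μb δ₀ (taylor b₀ F) := rfl
end KeyPolyProof


open KeyPolyProof in
/-- **Truncation at a key polynomial is a valuation.**  Let `μ` be a valuation of `K[x]`,
`μb` an extension of `μ` to `K̄[x]`, and `Q` a key polynomial for `μ`.  If
`w : K[x] → Γ ∪ {∞}` is the truncation `μ_Q` (i.e. `w f` is the minimum of the values of
the terms of the `Q`-expansion of `f`), then `w` is itself a valuation of `K[x]`. -/
theorem truncation_isValuation_of_isKeyPoly
    {K Kb Γ : Type*} [Field K] [Field Kb] [Algebra K Kb] [IsAlgClosure K Kb]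
    [AddCommGroup Γ] [LinearOrder Γ] [IsOrderedAddMonoid Γ]
    (μ : AddVal (Polynomial K) Γ) (μb : AddVal (Polynomial Kb) Γ)
    (hext : ∀ f : Polynomial K, μb.v (f.map (algebraMap K Kb)) = μ.v f)
    (Q : Polynomial K) (hkey : IsKeyPoly μb Q)
    (w : Polynomial K → WithTop Γ)
    (hw : ∀ (f : Polynomial K) (r : ℕ) (c : ℕ → Polynomial K), IsQExpansion Q f r c →
      w f = (Finset.range (r + 1)).inf fun ℓ => μ.v (c ℓ * Q ^ ℓ)) :
    w 0 = ⊤ ∧ w 1 = 0 ∧ (∀ f g, w (f * g) = w f + w g) ∧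
      (∀ f g, min (w f) (w g) ≤ w (f + g)) := by
  classical
  obtain ⟨hmonic, hdeg, hkey3⟩ := hkey
  haveI : IsAlgClosed Kb := IsAlgClosure.isAlgClosed K
  set φ := algebraMap K Kb with hφ
  have hbot : (⊥ : WithBot ℕ) < Q.degree := lt_of_le_of_lt bot_le hdeg
  have hQ0 : Q ≠ 0 := hmonic.ne_zero
  set Qb : Polynomial Kb := Q.map φ with hQb
  have hQb0 : Qb ≠ 0 := Polynomial.map_ne_zero hQ0
  have hQbdeg : 0 < Qb.natDegree := by
    have h1 : Qb.degree = Q.degree := by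
      rw [hQb]; exact degree_map_eq_of_injective (algebraMap K Kb).injective Q
    exact natDegree_pos_iff_degree_pos.mpr (h1 ▸ hdeg)
  have hQroots : Qb.roots ≠ 0 := by
    intro h
    have hcard := (Polynomial.splits_iff_card_roots.mp
      (IsAlgClosed.splits Qb))
    rw [h] at hcard
    simp at hcard
    omega
  obtain ⟨b₀, hb₀roots, hepsQ⟩ := KeyPolyProof.exists_eps μb hQb0 hQroots
  -- all `ε`-values are finite
  have hδtop : μb.v (X - C b₀) ≠ ⊤ := by
    intro htop
    have heps0 : IsEpsVal μb ((0 : Polynomial K).map φ) ⊤ :=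
      ⟨⟨b₀, by simp [IsRoot], htop⟩, fun a _ => le_top⟩
    have hlt := hkey3 0 (by simpa [degree_zero] using hbot) ⊤ _ heps0 hepsQ
    exact not_top_lt hlt
  obtain ⟨δ₀, hδ'⟩ := WithTop.ne_top_iff_exists.mp hδtop
  have hδ : μb.v (X - C b₀) = (δ₀ : WithTop Γ) := hδ'.symm
  -- roots of Qb are within δ₀
  have hδle : ∀ a ∈ Qb.roots, μb.v (X - C a) ≤ (δ₀ : WithTop Γ) := fun a ha =>
    hδ ▸ hepsQ.2 a (isRoot_of_mem_roots ha)
  -- roots of small polynomials are strictly within δ₀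
  have hsmall : ∀ f : Polynomial K, f ≠ 0 → f.degree < Q.degree →
      ∀ a ∈ (f.map φ).roots, μb.v (X - C a) < (δ₀ : WithTop Γ) := by
    intro f hf0 hfd a ha
    have hfb0 : f.map φ ≠ 0 := Polynomial.map_ne_zero hf0
    have hroots : (f.map φ).roots ≠ 0 := by
      intro h; rw [h] at ha; simp at ha
    obtain ⟨a₀, _, heps⟩ := KeyPolyProof.exists_eps μb hfb0 hroots
    have hlt := hkey3 f hfd _ _ heps hepsQ
    rw [hδ] at hlt
    exact lt_of_le_of_lt (heps.2 a (isRoot_of_mem_roots ha)) hlt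
  -- key values of Q
  have hVQ : V μb δ₀ b₀ Qb = μ.v Q := by
    rw [V_eq_mu μb δ₀ b₀ hδ hQb0 hδle, hQb, hext]
  have hJQ : 1 ≤ JV μb δ₀ b₀ Qb := JV_pos μb δ₀ b₀ hδ hQb0 hb₀roots
  -- values of small coefficients
  have hVc : ∀ c : Polynomial K, c ≠ 0 → c.degree < Q.degree →
      V μb δ₀ b₀ (c.map φ) = μ.v c ∧ JV μb δ₀ b₀ (c.map φ) = 0 := by
    intro c hc0 hcd
    have hcb0 : c.map φ ≠ 0 := Polynomial.map_ne_zero hc0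
    exact ⟨by rw [V_eq_mu μb δ₀ b₀ hδ hcb0 (fun a ha => (hsmall c hc0 hcd a ha).le), hext],
      JV_eq_zero μb δ₀ b₀ hδ hcb0 (hsmall c hc0 hcd)⟩
  -- term values
  have hterm : ∀ (c : Polynomial K) (ℓ : ℕ), c ≠ 0 → c.degree < Q.degree →
      V μb δ₀ b₀ ((c * Q ^ ℓ).map φ) = μ.v (c * Q ^ ℓ) ∧
        JV μb δ₀ b₀ ((c * Q ^ ℓ).map φ) = ℓ * JV μb δ₀ b₀ Qb := by
    intro c ℓ hc0 hcd
    have hcb0 : c.map φ ≠ 0 := Polynomial.map_ne_zero hc0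
    have hmap : (c * Q ^ ℓ).map φ = c.map φ * Qb ^ ℓ := by
      rw [Polynomial.map_mul, Polynomial.map_pow]
    constructor
    · rw [hmap, V_mul μb δ₀ b₀ hcb0 (pow_ne_zero ℓ hQb0), (hVc c hc0 hcd).1,
        (V_pow μb δ₀ b₀ hQb0 ℓ).1, hVQ, μ.v_mul, μ.v_pow]
    · rw [hmap, JV_mul μb δ₀ b₀ hcb0 (pow_ne_zero ℓ hQb0), (hVc c hc0 hcd).2,
        (V_pow μb δ₀ b₀ hQb0 ℓ).2, zero_add]
  -- the central claim: the truncation equals the disk valuation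
  have hmain : ∀ (f : Polynomial K) (r : ℕ) (c : ℕ → Polynomial K), f ≠ 0 →
      IsQExpansion Q f r c →
      ((Finset.range (r + 1)).inf fun ℓ => μ.v (c ℓ * Q ^ ℓ)) = V μb δ₀ b₀ (f.map φ) := by
    intro f r c hf0 hexp
    obtain ⟨hcdeg, hsum⟩ := hexp
    set T : ℕ → Polynomial Kb := fun ℓ => (c ℓ * Q ^ ℓ).map φ with hT
    have hTne : ∀ ℓ, c ℓ ≠ 0 → T ℓ ≠ 0 := fun ℓ h =>
      Polynomial.map_ne_zero (mul_ne_zero h (pow_ne_zero _ hQ0))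
    have hT0 : ∀ ℓ, c ℓ = 0 → T ℓ = 0 := by
      intro ℓ h
      show (c ℓ * Q ^ ℓ).map φ = 0
      rw [h, zero_mul, Polynomial.map_zero]
    have htermeq : ∀ ℓ, μ.v (c ℓ * Q ^ ℓ) = V μb δ₀ b₀ (T ℓ) := by
      intro ℓ
      by_cases hc0 : c ℓ = 0
      · rw [hT0 ℓ hc0, V_zero, hc0, zero_mul, μ.v_zero]
      · exact ((hterm (c ℓ) ℓ hc0 (hcdeg ℓ)).1).symm
    have hfmap : f.map φ = ∑ ℓ ∈ Finset.range (r + 1), T ℓ := by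
      rw [hsum, Polynomial.map_sum]
    rw [Finset.inf_congr rfl (fun ℓ _ => htermeq ℓ)]
    set m := (Finset.range (r + 1)).inf fun ℓ => V μb δ₀ b₀ (T ℓ) with hm
    have hex : ∃ ℓ ∈ Finset.range (r + 1), c ℓ ≠ 0 := by
      by_contra h
      push_neg at h
      exact hf0 (hsum.trans (Finset.sum_eq_zero fun ℓ hℓ => by rw [h ℓ hℓ, zero_mul]))
    obtain ⟨ℓ₁, hℓ₁mem, hℓ₁⟩ := hex
    have hmtop : m ≠ ⊤ := by
      intro h
      have h1 : m ≤ V μb δ₀ b₀ (T ℓ₁) := Finset.inf_le hℓ₁mem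
      rw [h] at h1
      exact V_ne_top μb δ₀ b₀ (hTne ℓ₁ hℓ₁) (top_le_iff.mp h1)
    refine le_antisymm ?_ ?_
    · rw [hfmap]; exact V_sum_ge μb δ₀ b₀ _ _
    -- the hard inequality : V (f.map φ) ≤ m
    ·
      set Fl := (Finset.range (r + 1)).filter (fun ℓ => V μb δ₀ b₀ (T ℓ) = m) with hFl
      have hFlne : Fl.Nonempty := by
        obtain ⟨i, hi, hieq⟩ := Finset.exists_mem_eq_inf (Finset.range (r + 1))
          ⟨0, Finset.mem_range.mpr (Nat.succ_pos _)⟩ (fun ℓ => V μb δ₀ b₀ (T ℓ))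
        exact ⟨i, Finset.mem_filter.mpr ⟨hi, hieq.symm⟩⟩
      set ℓs := Fl.max' hFlne with hℓs
      have hℓsF : ℓs ∈ Fl := Fl.max'_mem hFlne
      have hℓsmem : ℓs ∈ Finset.range (r + 1) := (Finset.mem_filter.mp hℓsF).1
      have hℓsm : V μb δ₀ b₀ (T ℓs) = m := (Finset.mem_filter.mp hℓsF).2
      have hcℓs : c ℓs ≠ 0 := by
        intro h0
        apply hmtop
        rw [← hℓsm, hT0 ℓs h0, V_zero]
      have hTℓs : T ℓs ≠ 0 := hTne ℓs hcℓs
      set js := JV μb δ₀ b₀ (T ℓs) with hjs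
      have hjs_eq : js = ℓs * JV μb δ₀ b₀ Qb := (hterm (c ℓs) ℓs hcℓs (hcdeg ℓs)).2
      -- the value of the ℓs-term at Taylor position js is exactly m
      have hts : tval μb δ₀ (taylor b₀ (T ℓs)) js = m := by
        have h1 := (Jx_spec μb δ₀ (taylor_ne_zero' b₀ hTℓs)).1
        rw [hjs, JV_def, h1, ← V_def, hℓsm]
      -- dominance : every other term is strictly bigger at position js
      have hdom : ∀ ℓ ∈ Finset.range (r + 1), ℓ ≠ ℓs →
          m < tval μb δ₀ (taylor b₀ (T ℓ)) js := by
        intro ℓ hℓ hne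
        by_cases h0 : c ℓ = 0
        · have htv : tval μb δ₀ (taylor b₀ (T ℓ)) js = ⊤ := by
            rw [hT0 ℓ h0, map_zero, tval]
            simp [μb.v_zero]
          rw [htv]
          exact lt_top_iff_ne_top.mpr hmtop
        · have hV : m ≤ V μb δ₀ b₀ (T ℓ) := Finset.inf_le hℓ
          rcases eq_or_lt_of_le hV with heq | hlt
          · have hℓFl : ℓ ∈ Fl := Finset.mem_filter.mpr ⟨hℓ, heq.symm⟩
            have hℓlt : ℓ < ℓs := lt_of_le_of_ne (Fl.le_max' ℓ hℓFl) hne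
            have hJlt : Jx μb δ₀ (taylor b₀ (T ℓ)) < js := by
              rw [← JV_def, (hterm (c ℓ) ℓ h0 (hcdeg ℓ)).2, hjs_eq]
              exact Nat.mul_lt_mul_of_lt_of_le hℓlt le_rfl hJQ
            have h2 := (Jx_spec μb δ₀ (taylor_ne_zero' b₀ (hTne ℓ h0))).2 js hJlt
            rw [← V_def, ← heq] at h2
            exact h2
          · exact lt_of_lt_of_le hlt ((V_def μb δ₀ b₀ (T ℓ)) ▸ G_le μb δ₀ (taylor b₀ (T ℓ)) js)
      -- the Taylor coefficient of f at js
      have hvtop : μb.v (C ((taylor b₀ (T ℓs)).coeff js)) ≠ ⊤ := by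
        intro htop
        apply hmtop
        rw [← hts, tval, htop, top_add]
      have hcoeff : μb.v (C ((taylor b₀ (f.map φ)).coeff js)) =
          μb.v (C ((taylor b₀ (T ℓs)).coeff js)) := by
        rw [hfmap, map_sum (taylor b₀), finset_sum_coeff, map_sum C]
        refine μb.v_sum_eq _ _ ℓs hℓsmem hvtop ?_
        intro ℓ hℓ hne
        have hd := hdom ℓ hℓ hne
        rw [← hts, tval] at hd
        rw [tval] at hd
        exact (WithTop.add_lt_add_iff_right (WithTop.coe_ne_top (a := js • δ₀))).mp hd
      have hfinal : tval μb δ₀ (taylor b₀ (f.map φ)) js = m := by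
        rw [tval, hcoeff, ← hts, tval]
      rw [V_def, ← hfinal]
      exact G_le μb δ₀ _ js
  -- assemble the four axioms
  have hw0 : w 0 = ⊤ := by
    have hexp : IsQExpansion Q 0 0 (fun _ => 0) :=
      ⟨fun _ => by simpa [degree_zero] using hbot, by simp⟩
    rw [hw 0 0 _ hexp]
    simp [μ.v_zero]
  have hw1 : w 1 = 0 := by
    have hexp : IsQExpansion Q 1 0 (fun _ => 1) :=
      ⟨fun _ => by simpa [degree_one] using hdeg, by simp⟩
    rw [hw 1 0 _ hexp]
    simp [μ.v_one]
  have hwf : ∀ f : Polynomial K, f ≠ 0 → w f = V μb δ₀ b₀ (f.map φ) := by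
    intro f hf
    obtain ⟨r, c, hexp⟩ := KeyPolyProof.exists_expansion Q hmonic hdeg f
    rw [hw f r c hexp, hmain f r c hf hexp]
  refine ⟨hw0, hw1, ?_, ?_⟩
  · intro f g
    by_cases hf : f = 0
    · rw [hf, zero_mul, hw0, top_add]
    by_cases hg : g = 0
    · rw [hg, mul_zero, hw0, add_top]
    rw [hwf f hf, hwf g hg, hwf (f * g) (mul_ne_zero hf hg), Polynomial.map_mul,
      V_mul μb δ₀ b₀ (Polynomial.map_ne_zero hf) (Polynomial.map_ne_zero hg)]
  · intro f g
    obtain ⟨r1, c1, he1⟩ := KeyPolyProof.exists_expansion Q hmonic hdeg f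
    obtain ⟨r2, c2, he2⟩ := KeyPolyProof.exists_expansion Q hmonic hdeg g
    have hp1 := KeyPolyProof.pad_expansion hbot he1 (le_max_left r1 r2)
    have hp2 := KeyPolyProof.pad_expansion hbot he2 (le_max_right r1 r2)
    set R := max r1 r2 with hR
    set d1 : ℕ → Polynomial K := fun ℓ => if ℓ ≤ r1 then c1 ℓ else 0 with hd1
    set d2 : ℕ → Polynomial K := fun ℓ => if ℓ ≤ r2 then c2 ℓ else 0 with hd2
    have hsum : IsQExpansion Q (f + g) R (fun ℓ => d1 ℓ + d2 ℓ) := by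
      constructor
      · intro ℓ
        exact lt_of_le_of_lt (degree_add_le _ _) (max_lt (hp1.1 ℓ) (hp2.1 ℓ))
      · rw [hp1.2, hp2.2, ← Finset.sum_add_distrib]
        exact Finset.sum_congr rfl fun ℓ _ => by rw [add_mul]
    rw [hw f R d1 hp1, hw g R d2 hp2, hw (f + g) R _ hsum]
    refine Finset.le_inf fun ℓ hℓ => ?_
    refine le_trans (min_le_min (Finset.inf_le hℓ) (Finset.inf_le hℓ)) ?_
    rw [add_mul]
    exact μ.v_add _ _
end

section
/- Let (L/K, v) be a valued field extension, η ∈ O_L, and g ∈ K[x] with g(η) = 0 and g = g(c) + ∂₁g(c)(x − c) + … + ∂_n g(c)(x − c)^n its Taylor expansion at some c ∈ K. If v(∂₁g(c)) + v(η − c) < v(∂_ℓ g(c)) + ℓ·v(η − c) for all 2 ≤ ℓ ≤ n, then letting b_ℓ = ∂_ℓ g(c)/∂₁ g(c) and h = 1 + b₂(η − c) + … + b_n(η − c)^{n−1}, one has v(h) = 0 and η − c = −g(c)/∂₁g(c) · h^{−1}; in particular v(η − c) = v(g(c)) − v(∂₁ g(c)). -/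
open Polynomial

section Aux
variable {L Γ : Type*} [Field L] [AddCommGroup Γ] [LinearOrder Γ] [IsOrderedAddMonoid Γ]

lemma AddVal.v_neg_s15 (v : AddVal L Γ) (x : L) : v.v (-x) = v.v x := by
  have h2 : v.v (-1 : L) + v.v (-1 : L) = 0 := by
    rw [← v.v_mul]; norm_num [v.v_one]
  have hne : v.v (-1 : L) ≠ ⊤ := by
    intro h; rw [h, top_add] at h2; exact WithTop.top_ne_zero h2 |>.elim
  have h0 : v.v (-1 : L) = 0 := by
    obtain ⟨γ, hγ⟩ := WithTop.ne_top_iff_exists.mp hne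
    rw [← hγ] at h2 ⊢
    have : γ + γ = 0 := by exact_mod_cast h2
    rcases lt_trichotomy γ 0 with h | h | h
    · have := add_lt_add h h
      simp only [add_zero] at this
      exact absurd this.ne ((not_not).mpr ‹γ + γ = 0›)
    · exact_mod_cast h
    · exact absurd this (add_pos h h).ne'
  calc v.v (-x) = v.v ((-1) * x) := by ring_nf
    _ = 0 + v.v x := by rw [v.v_mul, h0]
    _ = v.v x := zero_add _

lemma AddVal.v_pow_s15 (v : AddVal L Γ) (x : L) (k : ℕ) : v.v (x ^ k) = k • v.v x := by
  induction k with
  | zero => simpa using v.v_one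
  | succ k ih => rw [pow_succ, v.v_mul, ih, succ_nsmul]

lemma AddVal.v_sum_pos (v : AddVal L Γ) {ι : Type*} (s : Finset ι) (f : ι → L)
    (hf : ∀ i ∈ s, 0 < v.v (f i)) : 0 < v.v (∑ i ∈ s, f i) := by
  classical
  induction s using Finset.induction_on with
  | empty => simpa [v.v_zero] using WithTop.zero_ne_top.lt_top
  | @insert a s ha ih =>
    rw [Finset.sum_insert ha]
    refine lt_of_lt_of_le ?_ (v.v_add _ _)
    rw [lt_min_iff]
    exact ⟨hf _ (Finset.mem_insert_self _ _),
      ih fun i hi => hf i (Finset.mem_insert_of_mem hi)⟩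

end Aux

lemma aeval_eq_sum_hasseDeriv {K L : Type*} [CommRing K] [CommRing L] [Algebra K L]
    (g : Polynomial K) (c : K) (η : L) :
    aeval η g = ∑ ℓ ∈ Finset.range (g.natDegree + 1),
      algebraMap K L ((hasseDeriv ℓ g).eval c) * (η - algebraMap K L c) ^ ℓ := by
  conv_lhs => rw [← sum_taylor_eq g c]
  rw [Polynomial.sum_over_range' (n := g.natDegree + 1) _ (by simp) (by
    rw [natDegree_taylor]; omega)]
  rw [map_sum]
  refine Finset.sum_congr rfl fun i _ => ?_
  simp [taylor_coeff, Algebra.smul_def]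
/-- If `g(η) = 0` and the linear term of the Taylor expansion of `g` at `c` strictly
dominates (in value) all higher-order terms evaluated at `η`, then with
`b_ℓ = ∂_ℓ g(c)/∂₁ g(c)` and `h = 1 + Σ_{ℓ=2}^n b_ℓ (η - c)^{ℓ-1}` one has `v(h) = 0`,
`η - c = -(g(c)/∂₁g(c))·h⁻¹`, and in particular
`v(η - c) = v(g(c)) - v(∂₁ g(c))`. -/
theorem dominant_linear_term
    {K L Γ : Type*} [Field K] [Field L] [Algebra K L] [AddCommGroup Γ] [LinearOrder Γ] [IsOrderedAddMonoid Γ]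
    (v : AddVal L Γ) (hv : ∀ b : L, v.v b = ⊤ ↔ b = 0)
    (η : L) (hη : 0 ≤ v.v η)
    (g : Polynomial K) (hgη : Polynomial.aeval η g = 0)
    (c : K) (hc1 : (Polynomial.hasseDeriv 1 g).eval c ≠ 0)
    (hdom : ∀ ℓ : ℕ, 2 ≤ ℓ → ℓ ≤ g.natDegree →
      v.v (algebraMap K L ((Polynomial.hasseDeriv 1 g).eval c)) +
          v.v (η - algebraMap K L c) <
        v.v (algebraMap K L ((Polynomial.hasseDeriv ℓ g).eval c)) +
          ℓ • v.v (η - algebraMap K L c)) :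
    let h : L := 1 + ∑ ℓ ∈ Finset.Icc 2 g.natDegree,
      algebraMap K L ((Polynomial.hasseDeriv ℓ g).eval c /
        (Polynomial.hasseDeriv 1 g).eval c) * (η - algebraMap K L c) ^ (ℓ - 1)
    v.v h = 0 ∧
    η - algebraMap K L c =
      - algebraMap K L (g.eval c / (Polynomial.hasseDeriv 1 g).eval c) * h⁻¹ ∧
    v.v (algebraMap K L ((Polynomial.hasseDeriv 1 g).eval c)) +
        v.v (η - algebraMap K L c) =
      v.v (algebraMap K L (g.eval c)) := by
  intro h
  classical
  set u : L := η - algebraMap K L c with hu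
  set n := g.natDegree with hn
  have hdef : h = 1 + ∑ ℓ ∈ Finset.Icc 2 n,
      algebraMap K L ((hasseDeriv ℓ g).eval c / (hasseDeriv 1 g).eval c) * u ^ (ℓ - 1) := rfl
  -- abbreviation for the images of the Hasse derivatives
  set a : ℕ → L := fun ℓ => algebraMap K L ((hasseDeriv ℓ g).eval c) with ha
  have haeq : ∀ ℓ, algebraMap K L ((hasseDeriv ℓ g).eval c) = a ℓ := fun _ => rfl
  have ha1 : a 1 ≠ 0 := fun hh => hc1 ((_root_.map_eq_zero _).mp hh)
  have hva1 : v.v (a 1) ≠ ⊤ := fun hh => ha1 ((hv _).mp hh)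
  have hsum : ∑ ℓ ∈ Finset.range (n + 1), a ℓ * u ^ ℓ = 0 := by
    rw [← aeval_eq_sum_hasseDeriv g c η]; exact hgη
  -- n ≥ 1
  have hn1 : 1 ≤ n := by
    by_contra hcon
    obtain ⟨x, hx⟩ := Polynomial.natDegree_eq_zero.mp (by omega : g.natDegree = 0)
    apply hc1
    rw [← hx, hasseDeriv_one, derivative_C, eval_zero]
  have hset : Finset.range (n + 1) = insert 0 (insert 1 (Finset.Icc 2 n)) := by
    ext m; simp only [Finset.mem_range, Finset.mem_insert, Finset.mem_Icc]; omega
  have hsum' : a 0 + a 1 * u + ∑ ℓ ∈ Finset.Icc 2 n, a ℓ * u ^ ℓ = 0 := by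
    rw [hset, Finset.sum_insert (by simp), Finset.sum_insert (by simp)] at hsum
    rw [pow_zero, pow_one, mul_one] at hsum
    linear_combination hsum
  -- the sum in h, rewritten
  have hSrw : (∑ ℓ ∈ Finset.Icc 2 n,
      algebraMap K L ((hasseDeriv ℓ g).eval c / (hasseDeriv 1 g).eval c) * u ^ (ℓ - 1))
      = ∑ ℓ ∈ Finset.Icc 2 n, a ℓ / a 1 * u ^ (ℓ - 1) :=
    Finset.sum_congr rfl fun ℓ _ => by rw [map_div₀, haeq, haeq]
  -- key algebraic identity
  have hmul : a 1 * u * h = - a 0 := by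
    have hexp : a 1 * u * h = a 1 * u + ∑ ℓ ∈ Finset.Icc 2 n, a ℓ * u ^ ℓ := by
      rw [hdef, hSrw, mul_add, mul_one, Finset.mul_sum]
      congr 1
      refine Finset.sum_congr rfl fun ℓ hℓ => ?_
      obtain ⟨h2, hln⟩ := Finset.mem_Icc.mp hℓ
      have hupow : u ^ (ℓ - 1) * u = u ^ ℓ := by rw [← pow_succ]; congr 1; omega
      calc a 1 * u * (a ℓ / a 1 * u ^ (ℓ - 1))
          = a ℓ / a 1 * a 1 * (u ^ (ℓ - 1) * u) := by ring
        _ = a ℓ * u ^ ℓ := by rw [div_mul_cancel₀ _ ha1, hupow]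
    rw [hexp]; linear_combination hsum'
  -- positivity of the correction terms
  have htpos : ∀ ℓ ∈ Finset.Icc 2 n, 0 < v.v (a ℓ / a 1 * u ^ (ℓ - 1)) := by
    intro ℓ hℓ
    obtain ⟨h2, hln⟩ := Finset.mem_Icc.mp hℓ
    by_cases hu0 : u = 0
    · rw [hu0, zero_pow (by omega : ℓ - 1 ≠ 0), mul_zero, v.v_zero]
      exact WithTop.zero_ne_top.lt_top
    · have hvu : v.v u ≠ ⊤ := fun hh => hu0 ((hv _).mp hh)
      have key := hdom ℓ h2 hln
      simp only [haeq] at key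
      have hupow : u ^ (ℓ - 1) * u = u ^ ℓ := by rw [← pow_succ]; congr 1; omega
      have hrw : v.v (a ℓ) + ℓ • v.v u
          = v.v (a 1) + (v.v (a ℓ / a 1 * u ^ (ℓ - 1)) + v.v u) := by
        calc v.v (a ℓ) + ℓ • v.v u = v.v (a ℓ * u ^ ℓ) := by rw [v.v_mul, v.v_pow_s15]
          _ = v.v (a 1 * (a ℓ / a 1 * u ^ (ℓ - 1) * u)) := by
              congr 1
              calc a ℓ * u ^ ℓ = a ℓ / a 1 * a 1 * (u ^ (ℓ - 1) * u) := by
                    rw [div_mul_cancel₀ _ ha1, hupow]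
                _ = a 1 * (a ℓ / a 1 * u ^ (ℓ - 1) * u) := by ring
          _ = v.v (a 1) + (v.v (a ℓ / a 1 * u ^ (ℓ - 1)) + v.v u) := by
              rw [v.v_mul, v.v_mul]
      rw [hrw, WithTop.add_lt_add_iff_left hva1] at key
      nth_rewrite 1 [← zero_add (v.v u)] at key
      rwa [WithTop.add_lt_add_iff_right hvu] at key
  have hS : 0 < v.v (∑ ℓ ∈ Finset.Icc 2 n,
      algebraMap K L ((hasseDeriv ℓ g).eval c / (hasseDeriv 1 g).eval c) * u ^ (ℓ - 1)) := by
    rw [hSrw]; exact v.v_sum_pos _ _ htpos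
  -- v h = 0
  have vh : v.v h = 0 := by
    set S := ∑ ℓ ∈ Finset.Icc 2 n,
      algebraMap K L ((hasseDeriv ℓ g).eval c / (hasseDeriv 1 g).eval c) * u ^ (ℓ - 1) with hSdef
    have hge : 0 ≤ v.v h := by
      rw [hdef]
      refine le_trans ?_ (v.v_add 1 S)
      rw [v.v_one, min_eq_left hS.le]
    have hle : v.v h ≤ 0 := by
      by_contra hcon
      push_neg at hcon
      have h1 : (1 : L) = h + (-S) := by rw [hdef]; ring
      have h2 := v.v_add h (-S)
      rw [← h1, v.v_one, v.v_neg_s15] at h2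
      exact absurd (lt_of_lt_of_le (lt_min hcon hS) h2) (lt_irrefl _)
    exact le_antisymm hle hge
  have hne0 : h ≠ 0 := fun hh => by
    rw [hh, v.v_zero] at vh; exact WithTop.top_ne_zero vh
  refine ⟨vh, ?_, ?_⟩
  · have hgc : algebraMap K L (g.eval c) = a 0 := by simp [ha, hasseDeriv_zero]
    rw [map_div₀, haeq, hgc]
    have key2 : u = -a 0 / (a 1 * h) := by
      rw [eq_div_iff (mul_ne_zero ha1 hne0)]
      linear_combination hmul
    rw [key2, neg_div, neg_mul, ← div_eq_mul_inv, div_div]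
  · have h3 := congrArg v.v hmul
    rw [v.v_mul, v.v_mul, vh, add_zero, v.v_neg_s15] at h3
    rw [haeq]
    have hgc : algebraMap K L (g.eval c) = a 0 := by simp [ha, hasseDeriv_zero]
    rw [hgc]
    exact h3
end

section
/- Let μ be a valuation on K[x] and Q a key polynomial for μ. Let G_Q be the graded ring of the truncated valuation μ_Q, R_Q the subring of G_Q generated by initial forms in_Q(f) of polynomials f with deg(f) < deg(Q), and y_Q = in_Q(Q). Then R_Q is a subring of G_Q, y_Q is transcendental over R_Q, and G_Q = R_Q[y_Q]. -/
open Polynomial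

namespace AddValAux

variable {Kb Γ : Type*} [Field Kb] [AddCommGroup Γ] [LinearOrder Γ] [IsOrderedAddMonoid Γ]
  (μ : AddVal (Polynomial Kb) Γ)

lemma v_C_ne_top {c : Kb} (hc : c ≠ 0) : μ.v (Polynomial.C c) ≠ ⊤ := by
  intro h
  have h1 := μ.v_mul (C c) (C c⁻¹)
  rw [← C_mul, mul_inv_cancel₀ hc, C_1, μ.v_one, h, top_add] at h1
  exact (by simp : (0:WithTop Γ) ≠ ⊤) h1

lemma v_neg (f : Polynomial Kb) : μ.v (-f) = μ.v f := by
  have key : ∀ x : WithTop Γ, x + x = 0 → x = 0 := by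
    intro x hx
    induction x using WithTop.recTopCoe with
    | top => rw [top_add] at hx; exact absurd hx (by simp)
    | coe a =>
      rw [← WithTop.coe_add] at hx
      have ha : a + a = 0 := by exact_mod_cast hx
      have ha0 : a = 0 := by
        rcases lt_trichotomy a 0 with h' | h' | h'
        · exact absurd ha (ne_of_lt (add_neg h' h'))
        · exact h'
        · exact absurd ha (ne_of_gt (add_pos h' h'))
      rw [ha0]; rfl
  have hm1 : μ.v (-1 : Polynomial Kb) = 0 := by
    apply key
    rw [← μ.v_mul, neg_mul_neg, one_mul, μ.v_one]
  have : μ.v (-f) = μ.v (-1 * f) := by rw [neg_one_mul]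
  rw [this, μ.v_mul, hm1, zero_add]

lemma v_sub (f g : Polynomial Kb) : min (μ.v f) (μ.v g) ≤ μ.v (f - g) := by
  have := μ.v_add f (-g)
  rwa [v_neg, ← sub_eq_add_neg] at this

lemma v_pow (f : Polynomial Kb) (n : ℕ) : μ.v (f ^ n) = n • μ.v f := by
  induction n with
  | zero => simp [μ.v_one]
  | succ n ih => rw [pow_succ, μ.v_mul, ih, succ_nsmul]

lemma v_sum {ι : Type*} (s : Finset ι) (g : ι → Polynomial Kb) :
    s.inf (fun i => μ.v (g i)) ≤ μ.v (∑ i ∈ s, g i) := by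
  classical
  induction s using Finset.induction_on with
  | empty => simp [μ.v_zero]
  | insert _ _ h ih =>
    rw [Finset.sum_insert h, Finset.inf_insert]
    exact le_trans (min_le_min le_rfl ih) (μ.v_add _ _)

lemma v_prod (s : Multiset (Polynomial Kb)) : μ.v s.prod = (s.map μ.v).sum := by
  induction s using Multiset.induction_on with
  | empty => simp [μ.v_one]
  | cons a s ih => rw [Multiset.prod_cons, μ.v_mul, ih, Multiset.map_cons, Multiset.sum_cons]

end AddValAux

namespace AddValAux

variable {Kb Γ : Type*} [Field Kb] [AddCommGroup Γ] [LinearOrder Γ] [IsOrderedAddMonoid Γ]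
  (μ : AddVal (Polynomial Kb) Γ)

/-- Core estimate: for a product of linear factors whose roots are all at `v`-distance
`< δ` from `b`, the constant Taylor coefficient at `b` strictly dominates. -/
lemma taylor_est (b : Kb) (δ : WithTop Γ) (s : Multiset Kb) :
    ∀ u : Kb, u ≠ 0 → (∀ a ∈ s, μ.v (C (b - a)) < δ) →
    (taylor b (C u * (s.map fun a => X - C a).prod)).coeff 0 ≠ 0 ∧
      ∀ i : ℕ, 1 ≤ i →
        μ.v (C ((taylor b (C u * (s.map fun a => X - C a).prod)).coeff 0)) <
          μ.v (C ((taylor b (C u * (s.map fun a => X - C a).prod)).coeff i)) + i • δ := by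
  induction s using Multiset.induction_on with
  | empty =>
    intro u hu _
    simp only [Multiset.map_zero, Multiset.prod_zero, mul_one, taylor_C]
    constructor
    · simpa using hu
    · intro i hi
      have hzero : (C u).coeff i = 0 := by
        rw [coeff_C, if_neg (by omega)]
      rw [hzero, C_0, μ.v_zero, top_add]
      exact lt_top_iff_ne_top.mpr (v_C_ne_top μ (by simpa using hu))
  | cons a s ih =>
    intro u hu hs
    have hrec := ih u hu (fun x hx => hs x (Multiset.mem_cons_of_mem hx))
    have hba : μ.v (C (b - a)) < δ := hs a (Multiset.mem_cons_self a s)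
    have hbane : b - a ≠ 0 := by
      intro h; rw [h, C_0, μ.v_zero] at hba; exact not_top_lt hba
    have hAtop : μ.v (C (b - a)) ≠ ⊤ := v_C_ne_top μ hbane
    set p' : Polynomial Kb := C u * (s.map fun a => X - C a).prod with hp'
    have hp : C u * ((Multiset.map (fun a => X - C a) (a ::ₘ s)).prod) = (X - C a) * p' := by
      rw [Multiset.map_cons, Multiset.prod_cons, hp']; ring
    rw [hp]
    have ht : taylor b ((X - C a) * p') = (X + C (b - a)) * taylor b p' := by
      rw [taylor_mul, map_sub, taylor_X, taylor_C, C_sub]; ring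
    rw [ht]
    have hc0 : ((X + C (b - a)) * taylor b p').coeff 0 = (b - a) * (taylor b p').coeff 0 := by
      rw [mul_coeff_zero]; simp
    have hBtop : μ.v (C ((taylor b p').coeff 0)) ≠ ⊤ := v_C_ne_top μ hrec.1
    constructor
    · rw [hc0]; exact mul_ne_zero hbane hrec.1
    · intro i hi
      obtain ⟨j, rfl⟩ : ∃ j, i = j + 1 := ⟨i - 1, by omega⟩
      have hci : ((X + C (b - a)) * taylor b p').coeff (j + 1)
          = (taylor b p').coeff j + (b - a) * (taylor b p').coeff (j + 1) := by
        rw [add_mul, coeff_add, coeff_X_mul, coeff_C_mul]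
      set A := μ.v (C (b - a)) with hA
      set B := μ.v (C ((taylor b p').coeff 0)) with hB
      have hLHS : μ.v (C (((X + C (b - a)) * taylor b p').coeff 0)) = A + B := by
        rw [hc0, C_mul, μ.v_mul]
      rw [hLHS, hci]
      have hmin : min (μ.v (C ((taylor b p').coeff j)))
          (μ.v (C ((b - a) * (taylor b p').coeff (j + 1))))
          ≤ μ.v (C ((taylor b p').coeff j + (b - a) * (taylor b p').coeff (j + 1))) := by
        rw [C_add]; exact μ.v_add _ _
      have hstep : A + B < min (μ.v (C ((taylor b p').coeff j)))
          (μ.v (C ((b - a) * (taylor b p').coeff (j + 1)))) + (j+1) • δ := by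
        rw [← min_add_add_right]
        apply lt_min
        · -- branch 1 : v t'_j + (j+1)•δ > A + B
          have hBle : B ≤ μ.v (C ((taylor b p').coeff j)) + j • δ := by
            rcases Nat.eq_zero_or_pos j with hj | hj
            · subst hj; rw [zero_nsmul, add_zero]
            · exact (hrec.2 j hj).le
          calc A + B = B + A := add_comm _ _
            _ < B + δ := WithTop.add_lt_add_left hBtop hba
            _ ≤ (μ.v (C ((taylor b p').coeff j)) + j • δ) + δ := add_le_add_left hBle δ
            _ = μ.v (C ((taylor b p').coeff j)) + (j+1) • δ := by
                rw [succ_nsmul, add_assoc]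
        · -- branch 2
          have h2 := hrec.2 (j+1) (by omega)
          calc A + B < A + (μ.v (C ((taylor b p').coeff (j+1))) + (j+1) • δ) :=
                WithTop.add_lt_add_left hAtop h2
            _ = μ.v (C ((b - a) * (taylor b p').coeff (j + 1))) + (j+1) • δ := by
                rw [C_mul, μ.v_mul, add_assoc]
      exact lt_of_lt_of_le hstep (add_le_add_left hmin _)

lemma taylor_est' [IsAlgClosed Kb] (b : Kb) (δ : WithTop Γ) (p : Polynomial Kb) (hp : p ≠ 0)
    (hroots : ∀ a ∈ p.roots, μ.v (C (b - a)) < δ) :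
    (taylor b p).coeff 0 ≠ 0 ∧ ∀ i : ℕ, 1 ≤ i →
      μ.v (C ((taylor b p).coeff 0)) < μ.v (C ((taylor b p).coeff i)) + i • δ := by
  have hfac := (IsAlgClosed.splits p).eq_prod_roots
  have := taylor_est μ b δ p.roots p.leadingCoeff (leadingCoeff_ne_zero.mpr hp) hroots
  rwa [← hfac] at this

/-- If every root is at the same `v`-distance from `b` as its linear factor's value,
then the value of `p` equals the value of `p.eval b`. -/
lemma v_eq_v_eval [IsAlgClosed Kb] (b : Kb) (p : Polynomial Kb) (hp : p ≠ 0)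
    (h : ∀ a ∈ p.roots, μ.v (X - C a) = μ.v (C (b - a))) :
    μ.v p = μ.v (C (p.eval b)) := by
  have hfac := (IsAlgClosed.splits p).eq_prod_roots
  have heval : C (p.eval b) = C p.leadingCoeff * (p.roots.map fun a => C (b - a)).prod := by
    conv_lhs => rw [hfac]
    rw [eval_mul, eval_C, eval_multiset_prod, C_mul, map_multiset_prod, Multiset.map_map,
      Multiset.map_map]
    congr 2
    apply Multiset.map_congr rfl
    intro a _
    simp [Function.comp]
  conv_lhs => rw [hfac]
  rw [heval, μ.v_mul, μ.v_mul, v_prod, v_prod, Multiset.map_map, Multiset.map_map]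
  congr 2
  apply Multiset.map_congr rfl
  intro a ha
  simpa [Function.comp] using h a ha

end AddValAux

namespace AddValAux

variable {K Γ : Type*} [Field K] [AddCommGroup Γ] [LinearOrder Γ] [IsOrderedAddMonoid Γ]
  (μ : AddVal (Polynomial K) Γ) (Q : Polynomial K) (w : Polynomial K → WithTop Γ)

lemma w_single (hQ : 0 < Q.degree)
    (hw : ∀ (f : Polynomial K) (r : ℕ) (c : ℕ → Polynomial K), IsQExpansion Q f r c →
      w f = (Finset.range (r + 1)).inf fun ℓ => μ.v (c ℓ * Q ^ ℓ))
    {c : Polynomial K} (hc : c.degree < Q.degree) (ℓ : ℕ) :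
    w (c * Q ^ ℓ) = μ.v (c * Q ^ ℓ) := by
  classical
  have hbot : (⊥ : WithBot ℕ) < Q.degree := lt_of_le_of_lt bot_le hQ
  have hexp : IsQExpansion Q (c * Q ^ ℓ) ℓ (fun j => if j = ℓ then c else 0) := by
    constructor
    · intro j
      by_cases h : j = ℓ
      · simpa [h] using hc
      · simpa [h, degree_zero] using hbot
    · simp only [ite_mul, zero_mul, Finset.sum_ite_eq', Finset.mem_range]
      simp
  rw [hw _ _ _ hexp]
  apply le_antisymm
  · have hmem : ℓ ∈ Finset.range (ℓ+1) := Finset.mem_range.mpr (by omega)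
    have := Finset.inf_le (f := fun j => μ.v ((if j = ℓ then c else 0) * Q ^ j)) hmem
    simpa using this
  · apply Finset.le_inf
    intro j _
    by_cases h : j = ℓ
    · simp [h]
    · simp [h, μ.v_zero]

lemma w_small (hQ : 0 < Q.degree)
    (hw : ∀ (f : Polynomial K) (r : ℕ) (c : ℕ → Polynomial K), IsQExpansion Q f r c →
      w f = (Finset.range (r + 1)).inf fun ℓ => μ.v (c ℓ * Q ^ ℓ))
    {c : Polynomial K} (hc : c.degree < Q.degree) : w c = μ.v c := by
  have := w_single μ Q w hQ hw hc 0
  simpa using this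

lemma exists_qexp (hmonic : Q.Monic) (hQ : 0 < Q.degree) (f : Polynomial K) :
    ∃ c : ℕ → Polynomial K, IsQExpansion Q f f.natDegree c := by
  classical
  set q : ℕ → Polynomial K := fun n => Nat.rec f (fun _ p => p /ₘ Q) n with hq
  have hq0 : q 0 = f := rfl
  have hqs : ∀ n, q (n+1) = q n /ₘ Q := fun n => rfl
  set c : ℕ → Polynomial K := fun ℓ => q ℓ %ₘ Q with hc
  have hA : ∀ n, f = (∑ ℓ ∈ Finset.range n, c ℓ * Q ^ ℓ) + q n * Q ^ n := by
    intro n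
    induction n with
    | zero => simp [hq0]
    | succ n ih =>
      rw [Finset.sum_range_succ]
      have hqn : q n = c n + Q * (q n /ₘ Q) := by
        rw [hc]; exact (modByMonic_add_div (q n) Q).symm
      have hkey : q n * Q ^ n = c n * Q ^ n + q (n+1) * Q ^ (n+1) := by
        conv_lhs => rw [hqn]
        rw [hqs]; ring
      conv_lhs => rw [ih]
      rw [hkey]; ring
  have hB : ∀ n, q n ≠ 0 → (q n).natDegree + n ≤ f.natDegree := by
    intro n
    induction n with
    | zero => intro _; simp [hq0]
    | succ n ih =>
      intro hne
      have hqn0 : q n ≠ 0 := by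
        intro h; rw [hqs, h, zero_divByMonic] at hne; exact hne rfl
      have hdeg : (q (n+1)).degree < (q n).degree := by
        rw [hqs]; exact degree_divByMonic_lt _ Q hqn0 hQ
      have hlt : (q (n+1)).natDegree < (q n).natDegree :=
        natDegree_lt_natDegree hne hdeg
      have := ih hqn0
      omega
  have hzero : q (f.natDegree + 1) = 0 := by
    by_contra h
    have := hB (f.natDegree + 1) h
    omega
  refine ⟨c, fun ℓ => degree_modByMonic_lt _ hmonic, ?_⟩
  have := hA (f.natDegree + 1)
  rw [hzero, zero_mul, add_zero] at this
  exact this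

end AddValAux


/-- Two polynomials have the same initial form in the graded ring of the valuation `w`:
they have the same value and their difference has strictly bigger value (or they are
equal). -/
def InEq {K Γ : Type*} [Field K] [AddCommGroup Γ] [LinearOrder Γ] [IsOrderedAddMonoid Γ]
    (w : Polynomial K → WithTop Γ) (f g : Polynomial K) : Prop :=
  w f = w g ∧ (f ≠ g → w f < w (f - g))

/-- **Structure of the graded ring of a truncation [Nov1, Proposition 4.5].**
Let `Q` be a key polynomial for `μ` and `w = μ_Q` the truncation of `μ` at `Q`.  In the
graded ring `G_Q` of `w`, let `R_Q` be generated by the initial forms of polynomials of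
degree `< deg Q`, and `y_Q = in_Q(Q)`.  Then:
(1) `R_Q` is a subring of `G_Q` — i.e. the product of two initial forms of polynomials of
degree `< deg Q` is again such an initial form;
(2) `y_Q` is transcendental over `R_Q` — i.e. there are no nontrivial relations:
`w(Σ c_ℓ Q^ℓ) = min_ℓ w(c_ℓ Q^ℓ)` whenever `deg c_ℓ < deg Q`;
(3) `G_Q = R_Q[y_Q]` — i.e. every initial form `in_Q(f)` is a polynomial in `y_Q` with
coefficients given by initial forms of polynomials of degree `< deg Q`. -/
theorem gradedRing_of_truncation
    {K Kb Γ : Type*} [Field K] [Field Kb] [Algebra K Kb] [IsAlgClosure K Kb]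
    [AddCommGroup Γ] [LinearOrder Γ] [IsOrderedAddMonoid Γ]
    (μ : AddVal (Polynomial K) Γ) (μb : AddVal (Polynomial Kb) Γ)
    (hext : ∀ f : Polynomial K, μb.v (f.map (algebraMap K Kb)) = μ.v f)
    (Q : Polynomial K) (hkey : IsKeyPoly μb Q)
    (w : Polynomial K → WithTop Γ)
    (hw : ∀ (f : Polynomial K) (r : ℕ) (c : ℕ → Polynomial K), IsQExpansion Q f r c →
      w f = (Finset.range (r + 1)).inf fun ℓ => μ.v (c ℓ * Q ^ ℓ)) :
    (∀ f g : Polynomial K, f.degree < Q.degree → g.degree < Q.degree →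
      ∃ h : Polynomial K, h.degree < Q.degree ∧ InEq w (f * g) h) ∧
    (∀ (s : ℕ) (c : ℕ → Polynomial K), (∀ ℓ, (c ℓ).degree < Q.degree) →
      w (∑ ℓ ∈ Finset.range (s + 1), c ℓ * Q ^ ℓ) =
        (Finset.range (s + 1)).inf fun ℓ => w (c ℓ * Q ^ ℓ)) ∧
    (∀ f : Polynomial K, ∃ (s : ℕ) (c : ℕ → Polynomial K),
      (∀ ℓ, (c ℓ).degree < Q.degree) ∧
      f = ∑ ℓ ∈ Finset.range (s + 1), c ℓ * Q ^ ℓ ∧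
      w f = (Finset.range (s + 1)).inf fun ℓ => w (c ℓ * Q ^ ℓ)) := by
  
  classical
  obtain ⟨hmonic, hQpos, hkey3⟩ := hkey
  haveI : IsAlgClosed Kb := IsAlgClosure.isAlgClosed K
  set φ := algebraMap K Kb with hφ
  have hQne : Q ≠ 0 := hmonic.ne_zero
  have part2 : ∀ (s : ℕ) (c : ℕ → Polynomial K), (∀ ℓ, (c ℓ).degree < Q.degree) →
      w (∑ ℓ ∈ Finset.range (s + 1), c ℓ * Q ^ ℓ) =
        (Finset.range (s + 1)).inf fun ℓ => w (c ℓ * Q ^ ℓ) := by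
    intro s c hc
    rw [hw _ s c ⟨hc, rfl⟩]
    exact Finset.inf_congr rfl (fun ℓ _ => (AddValAux.w_single μ Q w hQpos hw (hc ℓ) ℓ).symm)
  have part3 : ∀ f : Polynomial K, ∃ (s : ℕ) (c : ℕ → Polynomial K),
      (∀ ℓ, (c ℓ).degree < Q.degree) ∧
      f = ∑ ℓ ∈ Finset.range (s + 1), c ℓ * Q ^ ℓ ∧
      w f = (Finset.range (s + 1)).inf fun ℓ => w (c ℓ * Q ^ ℓ) := by
    intro f
    obtain ⟨c, hc1, hc2⟩ := AddValAux.exists_qexp Q hmonic hQpos f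
    refine ⟨f.natDegree, c, hc1, hc2, ?_⟩
    calc w f = w (∑ ℓ ∈ Finset.range (f.natDegree + 1), c ℓ * Q ^ ℓ) := by rw [← hc2]
      _ = _ := part2 _ c hc1
  refine ⟨?_, part2, part3⟩
  intro f g hf hg
  by_cases hf0 : f = 0
  · refine ⟨0, by rw [degree_zero]; exact lt_of_le_of_lt bot_le hQpos, ?_, ?_⟩
    · rw [hf0, zero_mul]
    · intro hne; exact absurd (by rw [hf0, zero_mul]) hne
  by_cases hg0 : g = 0
  · refine ⟨0, by rw [degree_zero]; exact lt_of_le_of_lt bot_le hQpos, ?_, ?_⟩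
    · rw [hg0, mul_zero]
    · intro hne; exact absurd (by rw [hg0, mul_zero]) hne
  set c1 := f * g /ₘ Q with hc1def
  set c0 := f * g %ₘ Q with hc0def
  have hsum : c0 + Q * c1 = f * g := modByMonic_add_div (f * g) Q
  have hc0deg : c0.degree < Q.degree := degree_modByMonic_lt _ hmonic
  by_cases hc1z : c1 = 0
  · have hfg : f * g = c0 := by rw [← hsum, hc1z, mul_zero, add_zero]
    exact ⟨c0, hc0deg, by rw [hfg], fun hne => absurd hfg hne⟩
  have hfg0 : f * g ≠ 0 := mul_ne_zero hf0 hg0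
  have hc1deg : c1.degree < Q.degree := by
    have h1 : c1.natDegree = (f * g).natDegree - Q.natDegree := natDegree_divByMonic _ hmonic
    have hfn : f.natDegree < Q.natDegree := natDegree_lt_natDegree hf0 hf
    have hgn : g.natDegree < Q.natDegree := natDegree_lt_natDegree hg0 hg
    have hfgn : (f * g).natDegree = f.natDegree + g.natDegree := natDegree_mul hf0 hg0
    rw [degree_eq_natDegree hc1z, degree_eq_natDegree hQne]
    exact_mod_cast (by omega : c1.natDegree < Q.natDegree)
  -- choose a root b of Q over Kb of maximal value; δ := μb (X - C b)
  set Qb := Q.map φ with hQbdef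
  have hQbmonic : Qb.Monic := hmonic.map φ
  have hQbne : Qb ≠ 0 := hQbmonic.ne_zero
  have hdegmap : ∀ p : Polynomial K, (p.map φ).degree = p.degree :=
    fun p => degree_map_eq_of_injective (algebraMap K Kb).injective p
  have hQbdeg : Qb.degree ≠ 0 := by rw [hQbdef, hdegmap]; exact hQpos.ne'
  obtain ⟨b0, hb0⟩ := IsAlgClosed.exists_root Qb hQbdeg
  have hb0mem : b0 ∈ Qb.roots := mem_roots'.mpr ⟨hQbne, hb0⟩
  obtain ⟨b, hbmem, hbmax⟩ := Finset.exists_max_image Qb.roots.toFinset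
      (fun a => μb.v (X - C a)) ⟨b0, Multiset.mem_toFinset.mpr hb0mem⟩
  have hbroot : Qb.IsRoot b := (mem_roots'.mp (Multiset.mem_toFinset.mp hbmem)).2
  set δ := μb.v (X - C b) with hδ
  have hεQ : IsEpsVal μb Qb δ := by
    refine ⟨⟨b, hbroot, rfl⟩, ?_⟩
    intro a ha
    exact hbmax a (Multiset.mem_toFinset.mpr (mem_roots'.mpr ⟨hQbne, ha⟩))
  have hE1 : ∀ p : Polynomial K, p.degree < Q.degree → ∀ a ∈ (p.map φ).roots,
      μb.v (X - C a) < δ := by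
    intro p hp a ha
    obtain ⟨hpb0, haroot⟩ := mem_roots'.mp ha
    obtain ⟨a0, ha0mem, ha0max⟩ := Finset.exists_max_image (p.map φ).roots.toFinset
      (fun x => μb.v (X - C x)) ⟨a, Multiset.mem_toFinset.mpr ha⟩
    have hεp : IsEpsVal μb (p.map φ) (μb.v (X - C a0)) := by
      refine ⟨⟨a0, (mem_roots'.mp (Multiset.mem_toFinset.mp ha0mem)).2, rfl⟩, ?_⟩
      intro x hx
      exact ha0max x (Multiset.mem_toFinset.mpr (mem_roots'.mpr ⟨hpb0, hx⟩))
    have hlt := hkey3 p hp _ _ hεp hεQ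
    exact lt_of_le_of_lt (ha0max a (Multiset.mem_toFinset.mpr ha)) hlt
  have hE2 : ∀ a : Kb, μb.v (X - C a) < δ →
      μb.v (C (b - a)) = μb.v (X - C a) ∧ μb.v (C (b - a)) < δ := by
    intro a ha
    have hid : Polynomial.C (b - a) = (X - C a) - (X - C b) := by rw [C_sub]; ring
    have h1 : μb.v (X - C a) ≤ μb.v (C (b - a)) := by
      calc μb.v (X - C a) = min (μb.v (X - C a)) δ := (min_eq_left ha.le).symm
        _ ≤ μb.v ((X - C a) - (X - C b)) := AddValAux.v_sub μb _ _
        _ = μb.v (C (b - a)) := by rw [← hid]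
    have h2 : min δ (μb.v (C (b - a))) ≤ μb.v (X - C a) := by
      have hid2 : X - C a = (X - C b) + C (b - a) := by rw [C_sub]; ring
      rw [hid2]; exact μb.v_add _ _
    have hlt : μb.v (C (b - a)) < δ := by
      by_contra hcon
      push_neg at hcon
      rw [min_eq_left hcon] at h2
      exact absurd (lt_of_le_of_lt h2 ha) (lt_irrefl _)
    rw [min_eq_right hlt.le] at h2
    exact ⟨le_antisymm h2 h1, hlt⟩
  have hE : ∀ p : Polynomial K, p.degree < Q.degree → ∀ a ∈ (p.map φ).roots,
      μb.v (C (b - a)) < δ ∧ μb.v (X - C a) = μb.v (C (b - a)) := by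
    intro p hp a ha
    have h := hE2 a (hE1 p hp a ha)
    exact ⟨h.2, h.1.symm⟩
  have hEval : ∀ p : Polynomial K, p ≠ 0 → p.degree < Q.degree →
      μ.v p = μb.v (C ((p.map φ).eval b)) := by
    intro p hpne hp
    rw [← hext p]
    exact AddValAux.v_eq_v_eval μb b (p.map φ)
      ((Polynomial.map_ne_zero_iff (algebraMap K Kb).injective).mpr hpne)
      (fun a ha => (hE p hp a ha).2)
  set F := f.map φ with hFdef
  set G := g.map φ with hGdef
  set C0 := c0.map φ with hC0def
  set C1 := c1.map φ with hC1def
  have hmapsum : C0 + Qb * C1 = F * G := by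
    have := congrArg (Polynomial.map φ) hsum
    simpa [Polynomial.map_add, Polynomial.map_mul] using this
  have hQbeval : Qb.eval b = 0 := hbroot
  have hFGne : F * G ≠ 0 :=
    mul_ne_zero ((Polynomial.map_ne_zero_iff (algebraMap K Kb).injective).mpr hf0)
      ((Polynomial.map_ne_zero_iff (algebraMap K Kb).injective).mpr hg0)
  have hrootsFG : ∀ a ∈ (F * G).roots, μb.v (C (b - a)) < δ := by
    intro a ha
    rw [roots_mul hFGne] at ha
    rcases Multiset.mem_add.mp ha with h | h
    · exact (hE f hf a h).1
    · exact (hE g hg a h).1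
  have hc0ne : c0 ≠ 0 := by
    intro h
    have hz : C0 = 0 := by rw [hC0def, h, Polynomial.map_zero]
    have hev : (F * G).eval b = 0 := by
      rw [← hmapsum, hz, zero_add, eval_mul, hQbeval, zero_mul]
    have hbFG : b ∈ (F * G).roots := mem_roots'.mpr ⟨hFGne, hev⟩
    have := hrootsFG b hbFG
    rw [sub_self, C_0, μb.v_zero] at this
    exact not_top_lt this
  have hC0ne : C0 ≠ 0 := (Polynomial.map_ne_zero_iff (algebraMap K Kb).injective).mpr hc0ne
  have hL1c0 := AddValAux.taylor_est' μb b δ C0 hC0ne (fun a ha => (hE c0 hc0deg a ha).1)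
  have hL1FG := AddValAux.taylor_est' μb b δ (F * G) hFGne hrootsFG
  set v0 := μb.v (Polynomial.C (C0.eval b)) with hv0
  have hevalFG : (F * G).eval b = C0.eval b := by
    rw [← hmapsum, eval_add, eval_mul, hQbeval, zero_mul, add_zero]
  have hc0evalne : C0.eval b ≠ 0 := by
    have := hL1c0.1; rwa [taylor_coeff_zero] at this
  have hv0top : v0 ≠ ⊤ := AddValAux.v_C_ne_top μb hc0evalne
  have hμc0 : μ.v c0 = v0 := hEval c0 hc0ne hc0deg
  have hmain : v0 < μ.v (c1 * Q) := by
    rw [← hext (c1 * Q)]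
    have hmap : (c1 * Q).map φ = C1 * Qb := by rw [Polynomial.map_mul]
    rw [hmap]
    set T := taylor b (C1 * Qb) with hT
    have hTrecon := sum_taylor_eq (C1 * Qb) b
    have hineq : (T.support).inf (fun i => μb.v (C (T.coeff i) * (X - C b) ^ i))
        ≤ μb.v (C1 * Qb) := by
      conv_rhs => rw [← hTrecon]
      rw [Polynomial.sum_def]
      exact AddValAux.v_sum μb _ _
    refine lt_of_lt_of_le ?_ hineq
    rw [Finset.lt_inf_iff (lt_top_iff_ne_top.mpr hv0top)]
    intro i hi
    have hT0 : T.coeff 0 = 0 := by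
      rw [hT, taylor_coeff_zero, eval_mul, hQbeval, mul_zero]
    have hine : i ≠ 0 := fun h => (Polynomial.mem_support_iff.mp (h ▸ hi)) hT0
    have hsubid : C1 * Qb = F * G - C0 := by rw [← hmapsum]; ring
    have hTi : T.coeff i = (taylor b (F * G)).coeff i - (taylor b C0).coeff i := by
      rw [hT, hsubid, map_sub, coeff_sub]
    rw [μb.v_mul, AddValAux.v_pow, ← hδ, hTi]
    have hminle : min (μb.v (C ((taylor b (F * G)).coeff i))) (μb.v (C ((taylor b C0).coeff i)))
        ≤ μb.v (C ((taylor b (F * G)).coeff i - (taylor b C0).coeff i)) := by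
      rw [C_sub]; exact AddValAux.v_sub μb _ _
    have h1 : v0 < μb.v (C ((taylor b (F * G)).coeff i)) + i • δ := by
      have := hL1FG.2 i (by omega)
      rwa [taylor_coeff_zero, hevalFG] at this
    have h2 : v0 < μb.v (C ((taylor b C0).coeff i)) + i • δ := by
      have := hL1c0.2 i (by omega)
      rwa [taylor_coeff_zero] at this
    calc v0 < min (μb.v (C ((taylor b (F * G)).coeff i)) + i • δ)
          (μb.v (C ((taylor b C0).coeff i)) + i • δ) := lt_min h1 h2
      _ = min (μb.v (C ((taylor b (F * G)).coeff i)))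
            (μb.v (C ((taylor b C0).coeff i))) + i • δ := min_add_add_right _ _ _
      _ ≤ _ := add_le_add_left hminle _
  have hwc0 : w c0 = μ.v c0 := AddValAux.w_small μ Q w hQpos hw hc0deg
  have hwfg : w (f * g) = min (μ.v c0) (μ.v (c1 * Q)) := by
    have hexp : IsQExpansion Q (f * g) 1
        (fun ℓ => if ℓ = 0 then c0 else if ℓ = 1 then c1 else 0) := by
      constructor
      · intro ℓ
        by_cases h0 : ℓ = 0
        · simpa [h0] using hc0deg
        · by_cases h1 : ℓ = 1
          · simpa [h0, h1] using hc1deg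
          · simp only [h0, h1, if_false, degree_zero]
            exact lt_of_le_of_lt bot_le hQpos
      · rw [Finset.sum_range_succ, Finset.sum_range_one]
        simp only [reduceIte, pow_zero, mul_one, pow_one]
        rw [← hsum]
        norm_num
        ring
    rw [hw _ _ _ hexp]
    rw [show Finset.range (1 + 1) = {0, 1} from rfl, Finset.inf_insert, Finset.inf_singleton]
    simp only [reduceIte, pow_zero, mul_one, pow_one]
    rfl
  have hdiff : f * g - c0 = c1 * Q := by rw [← hsum]; ring
  have hwc1Q : w (c1 * Q) = μ.v (c1 * Q) := by
    have := AddValAux.w_single μ Q w hQpos hw hc1deg 1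
    rwa [pow_one] at this
  have hlt : μ.v c0 < μ.v (c1 * Q) := by rw [hμc0]; exact hmain
  refine ⟨c0, hc0deg, ?_, ?_⟩
  · rw [hwfg, hwc0]
    exact min_eq_left hlt.le
  · intro hne
    rw [hwfg, hdiff, hwc1Q, min_eq_left hlt.le]
    exact hlt
end
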